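/- arXiv:2505.14641 — 5 statements merged into one kernel-verified Lean document; each statement's English description precedes it below -/
import Mathlib

section
/- Let d ≥ 2 and q ≥ 3 be natural numbers, and let U be a subset of the vertices of the Hamming graph H(d,q) with |U| ≥ 2q^(d−1) + 1. Then the VC-dimension of (U, n(U)) is at least 2. -/
/-- Two vertices of the Hamming graph `H(d,q,t)` (vertex set `(ZMod q)^d`) are adjacent
if and only if they differ in exactly `t` coordinates. -/
def hammingAdj {d q : ℕ} (t : ℕ) (x y : Fin d → ZMod q) : Prop :=
  (Finset.univ.filter fun i => x i ≠ y i).card = t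

/-- `W ⊆ U` is shattered by the neighborhoods `n(U)`: for every `S ⊆ W` there is a
vertex `u ∈ U` with `n(u) ∩ W = S`. -/
def Shatters {d q : ℕ} (t : ℕ) (U W : Finset (Fin d → ZMod q)) : Prop :=
  ∀ S ⊆ W, ∃ u ∈ U, ∀ w ∈ W, (w ∈ S ↔ hammingAdj t u w)

section Helpers

variable {d q : ℕ}

lemma adj_single {x y : Fin d → ZMod q} (j : Fin d) (h1 : x j ≠ y j)
    (h2 : ∀ i, i ≠ j → x i = y i) : hammingAdj 1 x y := by
  unfold hammingAdj
  have : (Finset.univ.filter fun i => x i ≠ y i) = {j} := by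
    ext i
    simp only [Finset.mem_filter, Finset.mem_univ, true_and, Finset.mem_singleton]
    constructor
    · intro h
      by_contra hij
      exact h (h2 i hij)
    · rintro rfl; exact h1
  rw [this, Finset.card_singleton]

lemma not_adj_self (x : Fin d → ZMod q) : ¬ hammingAdj 1 x x := by
  unfold hammingAdj
  simp

lemma eq_off_of_adj {x y : Fin d → ZMod q} {j : Fin d} (h : hammingAdj 1 x y)
    (hj : x j ≠ y j) : ∀ i, i ≠ j → x i = y i := by
  intro i hij
  by_contra hne
  unfold hammingAdj at h
  have hsub : ({i, j} : Finset (Fin d)) ⊆ Finset.univ.filter fun k => x k ≠ y k := by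
    intro k hk
    simp only [Finset.mem_insert, Finset.mem_singleton] at hk
    simp only [Finset.mem_filter, Finset.mem_univ, true_and]
    rcases hk with rfl | rfl <;> assumption
  have := Finset.card_le_card hsub
  rw [Finset.card_pair hij, h] at this
  omega

lemma pow_bound (q n : ℕ) (hq : 2 ≤ q) : q + n ≤ q ^ (n + 1) := by
  induction n with
  | zero => simp
  | succ n ih =>
    have h1 : 1 ≤ q ^ (n + 1) := Nat.one_le_pow _ _ (by omega)
    calc q + (n + 1) ≤ 2 * q ^ (n + 1) := by omega
      _ ≤ q * q ^ (n + 1) := Nat.mul_le_mul_right _ hq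
      _ = q ^ (n + 1) * q := Nat.mul_comm _ _
      _ = q ^ (n + 1 + 1) := (pow_succ q (n + 1)).symm

lemma three_distinct {α : Type*} [DecidableEq α] {s : Finset α} (h : 2 < s.card) :
    ∃ a ∈ s, ∃ b ∈ s, ∃ c ∈ s, a ≠ b ∧ a ≠ c ∧ b ≠ c := by
  have ha0 : 0 < s.card := by omega
  obtain ⟨a, ha⟩ := Finset.card_pos.mp ha0
  have hb0 : 0 < (s.erase a).card := by
    have := Finset.card_erase_add_one ha; omega
  obtain ⟨b, hb⟩ := Finset.card_pos.mp hb0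
  obtain ⟨hba, hbs⟩ := Finset.mem_erase.mp hb
  have hc0 : 0 < ((s.erase a).erase b).card := by
    have h1 := Finset.card_erase_add_one hb
    have h2 := Finset.card_erase_add_one ha
    omega
  obtain ⟨c, hc⟩ := Finset.card_pos.mp hc0
  obtain ⟨hcb, hc'⟩ := Finset.mem_erase.mp hc
  obtain ⟨hca, hcs⟩ := Finset.mem_erase.mp hc'
  exact ⟨a, ha, b, hbs, c, hcs, hba.symm, hca.symm, hcb.symm⟩

lemma card_hyperplane (n : ℕ) [NeZero q] (x : ZMod q) :
    (Finset.univ.filter fun v : Fin (n + 1 + 1) → ZMod q => v 0 = x).card ≤ q ^ (n + 1) := by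
  have := Finset.card_le_card_of_injOn (s := Finset.univ.filter fun v : Fin (n + 1 + 1) → ZMod q => v 0 = x)
    (t := (Finset.univ : Finset (Fin (n + 1) → ZMod q))) Fin.tail
    (fun a _ => Finset.mem_univ _) ?_
  · calc (Finset.univ.filter fun v : Fin (n + 1 + 1) → ZMod q => v 0 = x).card
        ≤ (Finset.univ : Finset (Fin (n + 1) → ZMod q)).card := this
      _ = q ^ (n + 1) := by
          rw [Finset.card_univ, Fintype.card_fun, ZMod.card, Fintype.card_fin]
  · intro u hu v hv huv
    simp only [Finset.coe_filter, Set.mem_setOf_eq, Finset.mem_univ, true_and] at hu hv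
    funext i
    rcases eq_or_ne i 0 with rfl | hi
    · rw [hu, hv]
    · obtain ⟨j, rfl⟩ := Fin.eq_succ_of_ne_zero hi
      exact congrFun huv j

lemma eq_of_agree_off {n : ℕ} {x y : Fin n → ZMod q} (j : Fin n) (hj : x j = y j)
    (h : ∀ i, i ≠ j → x i = y i) : x = y := by
  funext i
  rcases eq_or_ne i j with rfl | hi
  · exact hj
  · exact h i hi

end Helpers

/-- if `d ≥ 2`, `q ≥ 3` and `U ⊆ V(H(d,q))` has `|U| ≥ 2q^(d-1)+1`,
then the VC-dimension of `(U, n(U))` is at least 2. -/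
theorem vc_dim_ge_two_of_card (d q : ℕ) (hd : 2 ≤ d) (hq : 3 ≤ q)
    (U : Finset (Fin d → ZMod q)) (hU : 2 * q ^ (d - 1) + 1 ≤ U.card) :
    ∃ W ⊆ U, W.card = 2 ∧ Shatters 1 U W := by
  obtain ⟨n, rfl⟩ : ∃ n, d = n + 2 := ⟨d - 2, by omega⟩
  haveI : NeZero q := ⟨by omega⟩
  have hd1 : n + 2 - 1 = n + 1 := by omega
  rw [hd1] at hU
  have hcardfun : (Finset.univ : Finset (Fin (n + 1) → ZMod q)).card = q ^ (n + 1) := by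
    rw [Finset.card_univ, Fintype.card_fun, ZMod.card, Fintype.card_fin]
  -- Step 1: find a line (in direction 0) with at least 3 points of U
  obtain ⟨ℓ, -, hl⟩ := Finset.exists_lt_card_fiber_of_mul_lt_card_of_maps_to
    (s := U) (t := (Finset.univ : Finset (Fin (n + 1) → ZMod q))) (f := Fin.tail) (n := 2)
    (fun v _ => Finset.mem_univ _) (by rw [hcardfun]; omega)
  obtain ⟨a, ha, b, hb, c, hc, hab, hac, hbc⟩ := three_distinct hl
  have haU : a ∈ U := (Finset.mem_filter.mp ha).1
  have hbU : b ∈ U := (Finset.mem_filter.mp hb).1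
  have hcU : c ∈ U := (Finset.mem_filter.mp hc).1
  -- any two distinct members of the fiber agree off coordinate 0 and are adjacent
  have hoff : ∀ x ∈ U.filter (fun v => Fin.tail v = ℓ), ∀ y ∈ U.filter (fun v => Fin.tail v = ℓ),
      ∀ i, i ≠ 0 → x i = y i := by
    intro x hx y hy i hi
    have hx' := (Finset.mem_filter.mp hx).2
    have hy' := (Finset.mem_filter.mp hy).2
    obtain ⟨j, rfl⟩ := Fin.eq_succ_of_ne_zero hi
    have : Fin.tail x = Fin.tail y := hx'.trans hy'.symm
    exact congrFun this j
  have hadj : ∀ x ∈ U.filter (fun v => Fin.tail v = ℓ), ∀ y ∈ U.filter (fun v => Fin.tail v = ℓ),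
      x ≠ y → hammingAdj 1 x y := by
    intro x hx y hy hxy
    refine adj_single 0 ?_ (fun i hi => hoff x hx y hy i hi)
    intro h0
    exact hxy (eq_of_agree_off 0 h0 (fun i hi => hoff x hx y hy i hi))
  by_cases hA : ∃ u ∈ U, ¬ hammingAdj 1 u a ∧ ¬ hammingAdj 1 u b
  · -- Case A : W = {a, b}
    obtain ⟨u, huU, huna, hunb⟩ := hA
    refine ⟨{a, b}, ?_, Finset.card_pair hab, ?_⟩
    · intro w hw
      rcases Finset.mem_insert.mp hw with rfl | hw
      · exact haU
      · rw [Finset.mem_singleton.mp hw]; exact hbU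
    · intro S hS
      by_cases haS : a ∈ S <;> by_cases hbS : b ∈ S
      · refine ⟨c, hcU, ?_⟩
        intro w hw
        rcases Finset.mem_insert.mp hw with rfl | hw
        · exact iff_of_true haS (hadj c hc w ha hac.symm)
        · rw [Finset.mem_singleton.mp hw]
          exact iff_of_true hbS (hadj c hc b hb hbc.symm)
      · refine ⟨b, hbU, ?_⟩
        intro w hw
        rcases Finset.mem_insert.mp hw with rfl | hw
        · exact iff_of_true haS (hadj b hb w ha hab.symm)
        · rw [Finset.mem_singleton.mp hw]
          exact iff_of_false hbS (not_adj_self b)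
      · refine ⟨a, haU, ?_⟩
        intro w hw
        rcases Finset.mem_insert.mp hw with rfl | hw
        · exact iff_of_false haS (not_adj_self w)
        · rw [Finset.mem_singleton.mp hw]
          exact iff_of_true hbS (hadj a ha b hb hab)
      · refine ⟨u, huU, ?_⟩
        intro w hw
        rcases Finset.mem_insert.mp hw with rfl | hw
        · exact iff_of_false haS huna
        · rw [Finset.mem_singleton.mp hw]
          exact iff_of_false hbS hunb
  · -- Case B : every u in U is adjacent to a or to b
    push_neg at hA
    have hoab : ∀ i, i ≠ 0 → a i = b i := hoff a ha b hb
    have hab0 : a 0 ≠ b 0 := by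
      intro h0
      exact hab (eq_of_agree_off 0 h0 hoab)
    -- Cover U by a line piece and two hyperplanes
    set L' := U.filter (fun v => (∀ i, i ≠ (0 : Fin (n+2)) → v i = a i) ∧ v 0 ≠ a 0 ∧ v 0 ≠ b 0) with hL'def
    set Fa := U.filter (fun v => v 0 = a 0) with hFadef
    set Fb := U.filter (fun v => v 0 = b 0) with hFbdef
    have hcover : U ⊆ L' ∪ Fa ∪ Fb := by
      intro u hu
      by_cases h1 : u 0 = a 0
      · exact Finset.mem_union_left _ (Finset.mem_union_right _
          (Finset.mem_filter.mpr ⟨hu, h1⟩))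
      by_cases h2 : u 0 = b 0
      · exact Finset.mem_union_right _ (Finset.mem_filter.mpr ⟨hu, h2⟩)
      refine Finset.mem_union_left _ (Finset.mem_union_left _ (Finset.mem_filter.mpr ⟨hu, ?_, h1, h2⟩))
      by_cases hua : hammingAdj 1 u a
      · exact eq_off_of_adj hua h1
      · have hub := hA u hu hua
        intro i hi
        rw [eq_off_of_adj hub h2 i hi]
        exact (hoab i hi).symm
    -- cardinality bounds
    have hLcard : L'.card + 2 ≤ q := by
      have hmem : (a 0) ∈ (Finset.univ : Finset (ZMod q)).erase (b 0) :=
        Finset.mem_erase.mpr ⟨hab0, Finset.mem_univ _⟩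
      have hinj := Finset.card_le_card_of_injOn (s := L')
        (t := ((Finset.univ : Finset (ZMod q)).erase (b 0)).erase (a 0)) (fun v => v 0) ?_ ?_
      · have e1 := Finset.card_erase_add_one hmem
        have e2 := Finset.card_erase_add_one (Finset.mem_univ (b 0))
        have e3 : (Finset.univ : Finset (ZMod q)).card = q := by
          rw [Finset.card_univ, ZMod.card]
        omega
      · intro v hv
        obtain ⟨-, -, h1, h2⟩ := Finset.mem_filter.mp hv
        exact Finset.mem_erase.mpr ⟨h1, Finset.mem_erase.mpr ⟨h2, Finset.mem_univ _⟩⟩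
      · intro u hu v hv huv
        simp only [hL'def, Finset.coe_filter, Set.mem_setOf_eq] at hu hv
        refine eq_of_agree_off 0 huv (fun i hi => ?_)
        rw [hu.2.1 i hi, hv.2.1 i hi]
      
    have hFacard : Fa.card ≤ q ^ (n + 1) := by
      refine le_trans (Finset.card_le_card ?_) (card_hyperplane n (a 0))
      intro v hv
      exact Finset.mem_filter.mpr ⟨Finset.mem_univ _, (Finset.mem_filter.mp hv).2⟩
    have hFbcard : Fb.card ≤ q ^ (n + 1) := by
      refine le_trans (Finset.card_le_card ?_) (card_hyperplane n (b 0))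
      intro v hv
      exact Finset.mem_filter.mpr ⟨Finset.mem_univ _, (Finset.mem_filter.mp hv).2⟩
    have hUle : U.card ≤ L'.card + Fa.card + Fb.card := by
      calc U.card ≤ (L' ∪ Fa ∪ Fb).card := Finset.card_le_card hcover
        _ ≤ (L' ∪ Fa).card + Fb.card := Finset.card_union_le _ _
        _ ≤ L'.card + Fa.card + Fb.card := by
            have := Finset.card_union_le L' Fa; omega
    have hpow : q + n ≤ q ^ (n + 1) := pow_bound q n (by omega)
    have haFa : a ∈ Fa := Finset.mem_filter.mpr ⟨haU, rfl⟩
    have hbFb : b ∈ Fb := Finset.mem_filter.mpr ⟨hbU, rfl⟩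
    have hTa := Finset.card_erase_add_one haFa
    have hFaLarge : n + 3 ≤ Fa.card := by omega
    have hFbLarge : n + 3 ≤ Fb.card := by omega
    -- pigeonhole on the directions of points of Fa.erase a
    set Ta := Fa.erase a with hTadef
    have hTaN : ∀ v ∈ Ta, ∃ j, v j ≠ a j := by
      intro v hv
      exact Function.ne_iff.mp (Finset.mem_erase.mp hv).1
    set f : (Fin (n + 2) → ZMod q) → Fin (n + 2) :=
      fun v => if h : ∃ j, v j ≠ a j then h.choose else 0 with hfdef
    have hfspec : ∀ v ∈ Ta, v (f v) ≠ a (f v) ∧ f v ≠ 0 := by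
      intro v hv
      have h := hTaN v hv
      have hfv : f v = h.choose := dif_pos h
      have hsp := h.choose_spec
      rw [hfv]
      refine ⟨hsp, ?_⟩
      intro h0
      rw [h0] at hsp
      exact hsp (Finset.mem_filter.mp (Finset.mem_erase.mp hv).2).2
    obtain ⟨j, hjmem, hjfib⟩ := Finset.exists_lt_card_fiber_of_mul_lt_card_of_maps_to
      (s := Ta) (t := (Finset.univ : Finset (Fin (n + 2))).erase 0) (f := f) (n := 1)
      (fun v hv => Finset.mem_erase.mpr ⟨(hfspec v hv).2, Finset.mem_univ _⟩)
      (by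
        have : ((Finset.univ : Finset (Fin (n + 2))).erase 0).card + 1 = n + 2 := by
          rw [Finset.card_erase_add_one (Finset.mem_univ _), Finset.card_univ, Fintype.card_fin]
        omega)
    have hj0 : j ≠ (0 : Fin (n + 2)) := (Finset.mem_erase.mp hjmem).1
    -- extract two distinct points in the fiber
    obtain ⟨a', ha'⟩ := Finset.card_pos.mp (by omega :
      0 < (Ta.filter fun v => f v = j).card)
    have ha'2 : 0 < ((Ta.filter fun v => f v = j).erase a').card := by
      have := Finset.card_erase_add_one ha'; omega
    obtain ⟨a'', ha''⟩ := Finset.card_pos.mp ha'2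
    obtain ⟨ha''ne, ha''mem⟩ := Finset.mem_erase.mp ha''
    -- facts about a' and a''
    have hfact : ∀ v ∈ Ta.filter fun w => f w = j,
        v ∈ U ∧ v 0 = a 0 ∧ v ≠ a ∧ v j ≠ a j ∧ (∀ i, i ≠ j → v i = a i) := by
      intro v hv
      obtain ⟨hv1, hv2⟩ := Finset.mem_filter.mp hv
      obtain ⟨hvne, hvFa⟩ := Finset.mem_erase.mp hv1
      obtain ⟨hvU, hv0⟩ := Finset.mem_filter.mp hvFa
      have hdiffj : v j ≠ a j := by
        have := (hfspec v hv1).1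
        rwa [hv2] at this
      refine ⟨hvU, hv0, hvne, hdiffj, ?_⟩
      -- v is adjacent to a (using case B hypothesis)
      have hva : hammingAdj 1 v a := by
        by_contra hva
        have hvb := hA v hvU hva
        -- v 0 = a 0 ≠ b 0, so v agrees with b off 0, hence v j = b j = a j, contradiction
        have hvb0 : v 0 ≠ b 0 := by rw [hv0]; exact hab0
        have := eq_off_of_adj hvb hvb0 j hj0
        rw [this] at hdiffj
        exact hdiffj (hoab j hj0).symm
      exact eq_off_of_adj hva hdiffj
    obtain ⟨ha'U, ha'0, ha'ne, ha'j, ha'off⟩ := hfact a' ha'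
    obtain ⟨ha''U, ha''0, ha''ne2, ha''j, ha''off⟩ := hfact a'' ha''mem
    have haa' : a ≠ a' := fun h => ha'ne h.symm
    -- adjacency facts
    have hadj_a'_a : hammingAdj 1 a' a := adj_single j ha'j ha'off
    have hadj_a_a' : hammingAdj 1 a a' := by
      refine adj_single j (fun h => ha'j h.symm) (fun i hi => (ha'off i hi).symm)
    have hadj_a''_a : hammingAdj 1 a'' a := adj_single j ha''j ha''off
    have hadj_a''_a' : hammingAdj 1 a'' a' := by
      refine adj_single j ?_ ?_
      · intro h
        refine ha''ne (eq_of_agree_off j h (fun i hi => ?_))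
        rw [ha''off i hi, ha'off i hi]
      · intro i hi
        rw [ha''off i hi, ha'off i hi]
    -- the empty-set witness
    set bad := Function.update a' 0 (b 0) with hbaddef
    have hnotsub : ¬ Fb ⊆ {b, bad} := by
      intro hsub
      have h1 := Finset.card_le_card hsub
      have h2 := Finset.card_insert_le b ({bad} : Finset (Fin (n + 2) → ZMod q))
      rw [Finset.card_singleton] at h2
      omega
    obtain ⟨u, huFb, hunot⟩ := Finset.not_subset.mp hnotsub
    simp only [Finset.mem_insert, Finset.mem_singleton, not_or] at hunot
    obtain ⟨hunb, hunbad⟩ := hunot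
    obtain ⟨huU, hu0⟩ := Finset.mem_filter.mp huFb
    have hu0a : u 0 ≠ a 0 := by rw [hu0]; exact fun h => hab0 h.symm
    have hu0a' : u 0 ≠ a' 0 := by rw [ha'0]; exact hu0a
    have huna : ¬ hammingAdj 1 u a := by
      intro h
      refine hunb ?_
      have hoffa := eq_off_of_adj h hu0a
      funext i
      rcases eq_or_ne i 0 with rfl | hi
      · exact hu0
      · rw [hoffa i hi]; exact hoab i hi
    have huna' : ¬ hammingAdj 1 u a' := by
      intro h
      refine hunbad ?_
      have hoffa' := eq_off_of_adj h hu0a'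
      funext i
      rcases eq_or_ne i 0 with rfl | hi
      · rw [hbaddef, Function.update_self]; exact hu0
      · rw [hoffa' i hi, hbaddef, Function.update_of_ne hi]
    -- conclude with W = {a, a'}
    refine ⟨{a, a'}, ?_, Finset.card_pair haa', ?_⟩
    · intro w hw
      rcases Finset.mem_insert.mp hw with rfl | hw
      · exact haU
      · rw [Finset.mem_singleton.mp hw]; exact ha'U
    · intro S hS
      by_cases haS : a ∈ S <;> by_cases ha'S : a' ∈ S
      · refine ⟨a'', ha''U, ?_⟩
        intro w hw
        rcases Finset.mem_insert.mp hw with rfl | hw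
        · exact iff_of_true haS hadj_a''_a
        · rw [Finset.mem_singleton.mp hw]
          exact iff_of_true ha'S hadj_a''_a'
      · refine ⟨a', ha'U, ?_⟩
        intro w hw
        rcases Finset.mem_insert.mp hw with rfl | hw
        · exact iff_of_true haS hadj_a'_a
        · rw [Finset.mem_singleton.mp hw]
          exact iff_of_false ha'S (not_adj_self a')
      · refine ⟨a, haU, ?_⟩
        intro w hw
        rcases Finset.mem_insert.mp hw with rfl | hw
        · exact iff_of_false haS (not_adj_self w)
        · rw [Finset.mem_singleton.mp hw]
          exact iff_of_true ha'S hadj_a_a'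
      · refine ⟨u, huU, ?_⟩
        intro w hw
        rcases Finset.mem_insert.mp hw with rfl | hw
        · exact iff_of_false haS huna
        · rw [Finset.mem_singleton.mp hw]
          exact iff_of_false ha'S huna'
end

section
/- Let q ≥ 3 be an odd natural number, and let U be a subset of the vertices of the Hamming graph H(2,q) with |U| ≥ 2q. Then the VC-dimension of (U, n(U)) is at least 2. -/
variable {q : ℕ}

def adj (u w : Fin 2 → ZMod q) : Prop :=
  (u 0 = w 0 ∧ u 1 ≠ w 1) ∨ (u 0 ≠ w 0 ∧ u 1 = w 1)

lemma ext2 {u w : Fin 2 → ZMod q} (h0 : u 0 = w 0) (h1 : u 1 = w 1) : u = w := by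
  funext i; fin_cases i <;> assumption

lemma adj_iff (u w : Fin 2 → ZMod q) : hammingAdj 1 u w ↔ adj u w := by
  unfold hammingAdj adj
  rw [show (Finset.univ : Finset (Fin 2)) = {0, 1} by decide]
  by_cases h0 : u 0 = w 0 <;> by_cases h1 : u 1 = w 1 <;>
    simp [Finset.filter_insert, Finset.filter_singleton, h0, h1]

lemma adj_irrefl (u : Fin 2 → ZMod q) : ¬ adj u u := by simp [adj]

/-- No pair of distinct points of `U` has all four witness types in `U`. -/
def Bad (U : Finset (Fin 2 → ZMod q)) : Prop :=
  ∀ w₁ ∈ U, ∀ w₂ ∈ U, w₁ ≠ w₂ →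
    ¬ ((∃ u ∈ U, adj u w₁ ∧ adj u w₂) ∧ (∃ u ∈ U, adj u w₁ ∧ ¬ adj u w₂) ∧
       (∃ u ∈ U, ¬ adj u w₁ ∧ adj u w₂) ∧ (∃ u ∈ U, ¬ adj u w₁ ∧ ¬ adj u w₂))

lemma bad_subset {U V : Finset (Fin 2 → ZMod q)} (hUV : V ⊆ U) (h : Bad U) : Bad V := by
  intro w₁ h₁ w₂ h₂ hne ⟨⟨a,ha,hA⟩,⟨b,hb,hB⟩,⟨c,hc,hC⟩,⟨d,hd,hD⟩⟩
  exact h w₁ (hUV h₁) w₂ (hUV h₂) hne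
    ⟨⟨a, hUV ha, hA⟩, ⟨b, hUV hb, hB⟩, ⟨c, hUV hc, hC⟩, ⟨d, hUV hd, hD⟩⟩

lemma shatters_of_witnesses {U : Finset (Fin 2 → ZMod q)} {w₁ w₂ : Fin 2 → ZMod q}
    (h₁ : w₁ ∈ U) (h₂ : w₂ ∈ U) (hne : w₁ ≠ w₂)
    (hW : (∃ u ∈ U, adj u w₁ ∧ adj u w₂) ∧ (∃ u ∈ U, adj u w₁ ∧ ¬ adj u w₂) ∧
       (∃ u ∈ U, ¬ adj u w₁ ∧ adj u w₂) ∧ (∃ u ∈ U, ¬ adj u w₁ ∧ ¬ adj u w₂)) :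
    ∃ W ⊆ U, W.card = 2 ∧ Shatters 1 U W := by
  obtain ⟨⟨a,ha,hA1,hA2⟩,⟨b,hb,hB1,hB2⟩,⟨c,hc,hC1,hC2⟩,⟨d,hd,hD1,hD2⟩⟩ := hW
  refine ⟨{w₁, w₂}, ?_, Finset.card_pair hne, ?_⟩
  · intro w hw
    rcases Finset.mem_insert.mp hw with rfl | hw
    · exact h₁
    · exact Finset.mem_singleton.mp hw ▸ h₂
  · intro S hS
    by_cases hw1 : w₁ ∈ S <;> by_cases hw2 : w₂ ∈ S
    · refine ⟨a, ha, ?_⟩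
      intro w hw
      rcases Finset.mem_insert.mp hw with rfl | hw
      · rw [adj_iff]; exact iff_of_true hw1 hA1
      · rw [Finset.mem_singleton.mp hw, adj_iff]; exact iff_of_true hw2 hA2
    · refine ⟨b, hb, ?_⟩
      intro w hw
      rcases Finset.mem_insert.mp hw with rfl | hw
      · rw [adj_iff]; exact iff_of_true hw1 hB1
      · rw [Finset.mem_singleton.mp hw, adj_iff]; exact iff_of_false hw2 hB2
    · refine ⟨c, hc, ?_⟩
      intro w hw
      rcases Finset.mem_insert.mp hw with rfl | hw
      · rw [adj_iff]; exact iff_of_false hw1 hC1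
      · rw [Finset.mem_singleton.mp hw, adj_iff]; exact iff_of_true hw2 hC2
    · refine ⟨d, hd, ?_⟩
      intro w hw
      rcases Finset.mem_insert.mp hw with rfl | hw
      · rw [adj_iff]; exact iff_of_false hw1 hD1
      · rw [Finset.mem_singleton.mp hw, adj_iff]; exact iff_of_false hw2 hD2

def rowF (U : Finset (Fin 2 → ZMod q)) (a : ZMod q) : Finset (Fin 2 → ZMod q) :=
  U.filter (fun w => w 0 = a)
def colF (U : Finset (Fin 2 → ZMod q)) (b : ZMod q) : Finset (Fin 2 → ZMod q) :=
  U.filter (fun w => w 1 = b)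
def rows (U : Finset (Fin 2 → ZMod q)) : Finset (ZMod q) := U.image (fun w => w 0)
def cols (U : Finset (Fin 2 → ZMod q)) : Finset (ZMod q) := U.image (fun w => w 1)

/-- The inductive statement. -/
def Concl (U : Finset (Fin 2 → ZMod q)) : Prop :=
  U.card ≤ (rows U).card + (cols U).card ∧
  (U.card = (rows U).card + (cols U).card →
    Even (rows U).card ∧ Even (cols U).card ∧
    (∀ a ∈ rows U, (rowF U a).card = 2) ∧ (∀ b ∈ cols U, (colF U b).card = 2))

def tr (w : Fin 2 → ZMod q) : Fin 2 → ZMod q := ![w 1, w 0]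

@[simp] lemma tr0 (w : Fin 2 → ZMod q) : tr w 0 = w 1 := rfl
@[simp] lemma tr1 (w : Fin 2 → ZMod q) : tr w 1 = w 0 := rfl

lemma tr_inj : Function.Injective (tr (q := q)) := by
  intro u w h
  exact ext2 (by rw [← tr1 u, ← tr1 w, h]) (by rw [← tr0 u, ← tr0 w, h])

lemma adj_tr {u w : Fin 2 → ZMod q} : adj (tr u) (tr w) ↔ adj u w := by
  simp only [adj, tr0, tr1]; tauto

lemma bad_tr {U : Finset (Fin 2 → ZMod q)} (h : Bad U) : Bad (U.image tr) := by
  intro w₁ h₁ w₂ h₂ hne ⟨⟨a,ha,hA⟩,⟨b,hb,hB⟩,⟨c,hc,hC⟩,⟨d,hd,hD⟩⟩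
  obtain ⟨w₁', hw₁', rfl⟩ := Finset.mem_image.mp h₁
  obtain ⟨w₂', hw₂', rfl⟩ := Finset.mem_image.mp h₂
  obtain ⟨a', ha', rfl⟩ := Finset.mem_image.mp ha
  obtain ⟨b', hb', rfl⟩ := Finset.mem_image.mp hb
  obtain ⟨c', hc', rfl⟩ := Finset.mem_image.mp hc
  obtain ⟨d', hd', rfl⟩ := Finset.mem_image.mp hd
  simp only [adj_tr] at hA hB hC hD
  exact h w₁' hw₁' w₂' hw₂' (fun hh => hne (by rw [hh]))
    ⟨⟨a', ha', hA⟩, ⟨b', hb', hB⟩, ⟨c', hc', hC⟩, ⟨d', hd', hD⟩⟩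

lemma rows_tr (U : Finset (Fin 2 → ZMod q)) : rows (U.image tr) = cols U := by
  unfold rows cols; rw [Finset.image_image]; rfl

lemma cols_tr (U : Finset (Fin 2 → ZMod q)) : cols (U.image tr) = rows U := by
  unfold rows cols; rw [Finset.image_image]; rfl

lemma rowF_tr (U : Finset (Fin 2 → ZMod q)) (b : ZMod q) :
    rowF (U.image tr) b = (colF U b).image tr := by
  unfold rowF colF
  rw [Finset.filter_image]; simp only [tr0]; rfl

lemma colF_tr (U : Finset (Fin 2 → ZMod q)) (a : ZMod q) :
    colF (U.image tr) a = (rowF U a).image tr := by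
  unfold rowF colF
  rw [Finset.filter_image]; simp only [tr1]; rfl

lemma concl_tr {U : Finset (Fin 2 → ZMod q)} (h : Concl (U.image tr)) : Concl U := by
  obtain ⟨h1, h2⟩ := h
  rw [Finset.card_image_of_injective _ tr_inj, rows_tr, cols_tr] at h1 h2
  refine ⟨by omega, fun heq => ?_⟩
  obtain ⟨e1, e2, hr, hc⟩ := h2 (by omega)
  refine ⟨e2, e1, ?_, ?_⟩
  · intro a ha
    have := hc a ha
    rwa [colF_tr, Finset.card_image_of_injective _ tr_inj] at this
  · intro b hb
    have := hr b hb
    rwa [rowF_tr, Finset.card_image_of_injective _ tr_inj] at this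

lemma adj_of_row {u w : Fin 2 → ZMod q} (h0 : u 0 = w 0) (h1 : u 1 ≠ w 1) : adj u w :=
  Or.inl ⟨h0, h1⟩
lemma adj_of_col {u w : Fin 2 → ZMod q} (h0 : u 0 ≠ w 0) (h1 : u 1 = w 1) : adj u w :=
  Or.inr ⟨h0, h1⟩
lemma not_adj_diag {u w : Fin 2 → ZMod q} (h0 : u 0 ≠ w 0) (h1 : u 1 ≠ w 1) : ¬ adj u w := by
  rintro (⟨h, _⟩ | ⟨_, h⟩) <;> contradiction

set_option maxHeartbeats 1000000 in
lemma case1 (U : Finset (Fin 2 → ZMod q)) (hbad : Bad U) (a : ZMod q)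
    (h3 : 3 ≤ (rowF U a).card)
    (IH : ∀ V : Finset (Fin 2 → ZMod q), V.card < U.card → Bad V →
            V.card ≤ (rows V).card + (cols V).card) :
    U.card + 1 ≤ (rows U).card + (cols U).card := by
  set B : Finset (ZMod q) := (rowF U a).image (fun w => w 1) with hBdef
  have hBcard : B.card = (rowF U a).card := by
    apply Finset.card_image_of_injOn
    intro u hu w hw h
    rw [Finset.mem_coe, rowF, Finset.mem_filter] at hu hw
    exact ext2 (by rw [hu.2, hw.2]) h
  have hB3 : 3 ≤ B.card := by omega
  have hmemB : ∀ b ∈ B, ∃ w ∈ U, w 0 = a ∧ w 1 = b := by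
    intro b hb
    obtain ⟨w, hw, hwb⟩ := Finset.mem_image.mp hb
    rw [rowF, Finset.mem_filter] at hw
    exact ⟨w, hw.1, hw.2, hwb⟩
  -- the key structural sub-lemma
  have key : ∀ w ∈ U, w 0 ≠ a → w 1 ∈ B →
      (∀ w' ∈ U, w' 0 = w 0 → w' = w) ∧ (∀ w' ∈ U, w' 1 = w 1 → w' 0 ≠ a → w' = w) := by
    intro w hw hwa hwB
    have h2 : 1 < (B.erase (w 1)).card := by
      have := Finset.card_erase_of_mem hwB
      omega
    obtain ⟨b₁, hb₁, b₂, hb₂, hbne⟩ := Finset.one_lt_card.mp h2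
    have hb₁w : b₁ ≠ w 1 := Finset.ne_of_mem_erase hb₁
    have hb₂w : b₂ ≠ w 1 := Finset.ne_of_mem_erase hb₂
    obtain ⟨p₁, hp₁U, hp₁0, hp₁1⟩ := hmemB b₁ (Finset.mem_of_mem_erase hb₁)
    obtain ⟨p₂, hp₂U, hp₂0, hp₂1⟩ := hmemB b₂ (Finset.mem_of_mem_erase hb₂)
    obtain ⟨py, hpyU, hpy0, hpy1⟩ := hmemB (w 1) hwB
    have hwp₁ : w ≠ p₁ := fun h => hwa (by rw [h, hp₁0])
    have hwp₂ : w ≠ p₂ := fun h => hwa (by rw [h, hp₂0])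
    have h10 : ∀ u ∈ U, adj u w → adj u p₁ := by
      intro u hu hadj
      by_contra hnadj
      refine hbad w hw p₁ hp₁U hwp₁
        ⟨⟨py, hpyU, adj_of_col (by rw [hpy0]; exact fun h => hwa h.symm) hpy1,
           adj_of_row (by rw [hpy0, hp₁0]) (by rw [hpy1, hp₁1]; exact fun h => hb₁w h.symm)⟩,
         ⟨u, hu, hadj, hnadj⟩,
         ⟨p₂, hp₂U, not_adj_diag (by rw [hp₂0]; exact fun h => hwa h.symm)
             (by rw [hp₂1]; exact hb₂w),
           adj_of_row (by rw [hp₂0, hp₁0]) (by rw [hp₂1, hp₁1]; exact hbne.symm)⟩,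
         ⟨w, hw, adj_irrefl w, not_adj_diag (by rw [hp₁0]; exact hwa)
             (by rw [hp₁1]; exact fun h => hb₁w h.symm)⟩⟩
    have h10' : ∀ u ∈ U, adj u w → adj u p₂ := by
      intro u hu hadj
      by_contra hnadj
      refine hbad w hw p₂ hp₂U hwp₂
        ⟨⟨py, hpyU, adj_of_col (by rw [hpy0]; exact fun h => hwa h.symm) hpy1,
           adj_of_row (by rw [hpy0, hp₂0]) (by rw [hpy1, hp₂1]; exact fun h => hb₂w h.symm)⟩,
         ⟨u, hu, hadj, hnadj⟩,
         ⟨p₁, hp₁U, not_adj_diag (by rw [hp₁0]; exact fun h => hwa h.symm)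
             (by rw [hp₁1]; exact hb₁w),
           adj_of_row (by rw [hp₁0, hp₂0]) (by rw [hp₁1, hp₂1]; exact hbne)⟩,
         ⟨w, hw, adj_irrefl w, not_adj_diag (by rw [hp₂0]; exact hwa)
             (by rw [hp₂1]; exact fun h => hb₂w h.symm)⟩⟩
    constructor
    · intro w' hw' hrow
      by_contra hne'
      have h1 : w' 1 ≠ w 1 := fun h => hne' (ext2 hrow h)
      have ha1 := h10 w' hw' (adj_of_row hrow h1)
      have ha2 := h10' w' hw' (adj_of_row hrow h1)
      have e1 : w' 1 = b₁ := by
        rcases ha1 with ⟨h, _⟩ | ⟨_, h⟩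
        · exact absurd (by rw [← h, hrow] : w 0 = p₁ 0) (by rw [hp₁0]; exact hwa)
        · rw [h, hp₁1]
      have e2 : w' 1 = b₂ := by
        rcases ha2 with ⟨h, _⟩ | ⟨_, h⟩
        · exact absurd (by rw [← h, hrow] : w 0 = p₂ 0) (by rw [hp₂0]; exact hwa)
        · rw [h, hp₂1]
      exact hbne (by rw [← e1, e2])
    · intro w' hw' hcol hw'a
      by_contra hne'
      have h0 : w' 0 ≠ w 0 := fun h => hne' (ext2 h hcol)
      have ha1 := h10 w' hw' (adj_of_col h0 hcol)
      rcases ha1 with ⟨h, _⟩ | ⟨_, h⟩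
      · exact hw'a (by rw [h, hp₁0])
      · exact hb₁w (by rw [← hp₁1, ← h, hcol])
  -- counting
  set P : Finset (Fin 2 → ZMod q) := U.filter (fun w => ¬ w 0 = a ∧ w 1 ∈ B) with hPdef
  set U' : Finset (Fin 2 → ZMod q) := U.filter (fun w => ¬ w 0 = a ∧ ¬ w 1 ∈ B) with hU'def
  set Pr : Finset (ZMod q) := P.image (fun w => w 0) with hPr
  set Ur : Finset (ZMod q) := U'.image (fun w => w 0) with hUr
  have hsplit : U.card = (rowF U a).card + (P.card + U'.card) := by
    have h1 := Finset.card_filter_add_card_filter_not (s := U) (fun w => w 0 = a)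
    have h2 := Finset.card_filter_add_card_filter_not
        (s := U.filter (fun w => ¬ w 0 = a)) (fun w => w 1 ∈ B)
    rw [Finset.filter_filter, Finset.filter_filter, ← hPdef, ← hU'def] at h2
    rw [show U.filter (fun w => w 0 = a) = rowF U a from rfl] at h1
    set Q := U.filter (fun w => ¬ w 0 = a) with hQ
    clear_value Q P U' B
    omega
  have hPcard : P.card = Pr.card := by
    rw [hPr]
    refine (Finset.card_image_of_injOn ?_).symm
    intro u hu w hw h
    rw [Finset.mem_coe, hPdef, Finset.mem_filter] at hu hw
    exact ((key u hu.1 hu.2.1 hu.2.2).1 w hw.1 h.symm).symm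
  -- row a is occupied
  have h3' : 0 < (rowF U a).card := by clear_value B P U' Pr Ur; omega
  obtain ⟨wa, hwa⟩ := Finset.card_pos.mp h3'
  rw [rowF, Finset.mem_filter] at hwa
  have hrowsub : insert a (Pr ∪ Ur) ⊆ rows U := by
    intro z hz
    rcases Finset.mem_insert.mp hz with rfl | hz
    · exact Finset.mem_image.mpr ⟨wa, hwa.1, hwa.2⟩
    · rcases Finset.mem_union.mp hz with hz | hz
      · rw [hPr] at hz
        obtain ⟨w, hw, hwz⟩ := Finset.mem_image.mp hz
        exact Finset.mem_image.mpr ⟨w, (Finset.mem_filter.mp hw).1, hwz⟩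
      · rw [hUr] at hz
        obtain ⟨w, hw, hwz⟩ := Finset.mem_image.mp hz
        exact Finset.mem_image.mpr ⟨w, (Finset.mem_filter.mp hw).1, hwz⟩
  have hdisj1 : a ∉ Pr ∪ Ur := by
    intro h
    rcases Finset.mem_union.mp h with h | h
    · rw [hPr] at h
      obtain ⟨w, hw, hwz⟩ := Finset.mem_image.mp h
      exact (Finset.mem_filter.mp hw).2.1 hwz
    · rw [hUr] at h
      obtain ⟨w, hw, hwz⟩ := Finset.mem_image.mp h
      exact (Finset.mem_filter.mp hw).2.1 hwz
  have hdisj2 : Disjoint Pr Ur := by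
    rw [Finset.disjoint_left]
    intro z hzP hzU'
    rw [hPr] at hzP
    rw [hUr] at hzU'
    obtain ⟨w, hw, hwz⟩ := Finset.mem_image.mp hzP
    obtain ⟨w', hw', hwz'⟩ := Finset.mem_image.mp hzU'
    rw [Finset.mem_filter] at hw hw'
    have := (key w hw.1 hw.2.1 hw.2.2).1 w' hw'.1 (by rw [hwz', hwz])
    exact hw'.2.2 (this ▸ hw.2.2)
  have hrowcard : 1 + (Pr.card + Ur.card) ≤ (rows U).card := by
    have h := Finset.card_le_card hrowsub
    rw [Finset.card_insert_of_notMem hdisj1, Finset.card_union_of_disjoint hdisj2] at h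
    clear_value B P U' Pr Ur
    omega
  have hcolsub : B ∪ cols U' ⊆ cols U := by
    intro z hz
    rcases Finset.mem_union.mp hz with hz | hz
    · rw [hBdef] at hz
      obtain ⟨w, hw, hwz⟩ := Finset.mem_image.mp hz
      exact Finset.mem_image.mpr ⟨w, (Finset.mem_filter.mp hw).1, hwz⟩
    · obtain ⟨w, hw, hwz⟩ := Finset.mem_image.mp hz
      exact Finset.mem_image.mpr ⟨w, (Finset.mem_filter.mp hw).1, hwz⟩
  have hdisjc : Disjoint B (cols U') := by
    rw [Finset.disjoint_left]
    intro z hzB hzC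
    obtain ⟨w, hw, hwz⟩ := Finset.mem_image.mp hzC
    exact (Finset.mem_filter.mp hw).2.2 (hwz ▸ hzB)
  have hcolcard : B.card + (cols U').card ≤ (cols U).card := by
    have h := Finset.card_le_card hcolsub
    rw [Finset.card_union_of_disjoint hdisjc] at h
    clear_value B P U' Pr Ur
    omega
  have hIH : U'.card ≤ (rows U').card + (cols U').card := by
    refine IH U' ?_ (bad_subset (Finset.filter_subset _ _) hbad)
    clear_value B P U' Pr Ur
    omega
  have hrowsU' : rows U' = Ur := by rw [hUr]; rfl
  rw [hrowsU'] at hIH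
  clear_value B P U' Pr Ur
  omega

lemma case2 (U : Finset (Fin 2 → ZMod q)) (hbad : Bad U)
    (hcol2 : ∀ b, (colF U b).card ≤ 2)
    (u : Fin 2 → ZMod q) (hu : u ∈ U) (hrow1 : ∀ w ∈ U, w 0 = u 0 → w = u)
    (IH : ∀ V : Finset (Fin 2 → ZMod q), V.card < U.card → Bad V → Concl V) : Concl U := by
  set U' : Finset (Fin 2 → ZMod q) := U.erase u with hU'def
  have hcard : U'.card + 1 = U.card := Finset.card_erase_add_one hu
  have hrows' : rows U' = (rows U).erase (u 0) := by
    ext z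
    constructor
    · intro hz
      obtain ⟨w, hw, rfl⟩ := Finset.mem_image.mp hz
      obtain ⟨hwne, hwU⟩ := Finset.mem_erase.mp hw
      refine Finset.mem_erase.mpr ⟨?_, Finset.mem_image.mpr ⟨w, hwU, rfl⟩⟩
      exact fun h => hwne (hrow1 w hwU h)
    · intro hz
      obtain ⟨hzne, hz⟩ := Finset.mem_erase.mp hz
      obtain ⟨w, hwU, rfl⟩ := Finset.mem_image.mp hz
      exact Finset.mem_image.mpr ⟨w, Finset.mem_erase.mpr ⟨fun h => hzne (by rw [h]), hwU⟩, rfl⟩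
  have hρ : (rows U').card + 1 = (rows U).card := by
    rw [hrows']
    exact Finset.card_erase_add_one (Finset.mem_image.mpr ⟨u, hu, rfl⟩)
  have hbad' : Bad U' := bad_subset (Finset.erase_subset _ _) hbad
  have hlt : U'.card < U.card := by omega
  obtain ⟨hIH1, hIH2⟩ := IH U' hlt hbad'
  by_cases hv : ∃ v ∈ U, v ≠ u ∧ v 1 = u 1
  · obtain ⟨v, hvU, hvne, hv1⟩ := hv
    have hvU' : v ∈ U' := Finset.mem_erase.mpr ⟨hvne, hvU⟩
    have hcols' : cols U' = cols U := by
      refine Finset.Subset.antisymm (Finset.image_subset_image (Finset.erase_subset _ _)) ?_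
      intro z hz
      obtain ⟨w, hwU, rfl⟩ := Finset.mem_image.mp hz
      by_cases hwu : w = u
      · exact Finset.mem_image.mpr ⟨v, hvU', by rw [hv1, hwu]⟩
      · exact Finset.mem_image.mpr ⟨w, Finset.mem_erase.mpr ⟨hwu, hwU⟩, rfl⟩
    rw [hcols'] at hIH1
    refine ⟨by omega, fun heq => ?_⟩
    exfalso
    have heq' : U'.card = (rows U').card + (cols U').card := by rw [hcols']; omega
    obtain ⟨_, _, _, hc2⟩ := hIH2 heq'
    have hub : u 1 ∈ cols U' := Finset.mem_image.mpr ⟨v, hvU', hv1⟩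
    have h2 := hc2 (u 1) hub
    have hsub : {u, v} ⊆ colF U (u 1) := by
      intro w hw
      rcases Finset.mem_insert.mp hw with rfl | hw
      · exact Finset.mem_filter.mpr ⟨hu, rfl⟩
      · rw [Finset.mem_singleton.mp hw]
        exact Finset.mem_filter.mpr ⟨hvU, hv1⟩
    have hpair : ({u, v} : Finset (Fin 2 → ZMod q)).card = 2 :=
      Finset.card_pair (fun h => hvne h.symm)
    have hcups : ({u, v} : Finset (Fin 2 → ZMod q)) = colF U (u 1) :=
      Finset.eq_of_subset_of_card_le hsub (by rw [hpair]; exact hcol2 (u 1))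
    have hcol' : colF U' (u 1) = {v} := by
      rw [colF, hU'def, Finset.filter_erase, ← colF, ← hcups]
      exact Finset.erase_insert (by rw [Finset.mem_singleton]; exact fun h => hvne h.symm)
    rw [hcol'] at h2
    simp at h2
  · push_neg at hv
    have hcols' : cols U' = (cols U).erase (u 1) := by
      ext z
      constructor
      · intro hz
        obtain ⟨w, hw, rfl⟩ := Finset.mem_image.mp hz
        obtain ⟨hwne, hwU⟩ := Finset.mem_erase.mp hw
        refine Finset.mem_erase.mpr ⟨?_, Finset.mem_image.mpr ⟨w, hwU, rfl⟩⟩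
        exact fun h => (hv w hwU hwne) h
      · intro hz
        obtain ⟨hzne, hz⟩ := Finset.mem_erase.mp hz
        obtain ⟨w, hwU, rfl⟩ := Finset.mem_image.mp hz
        exact Finset.mem_image.mpr ⟨w, Finset.mem_erase.mpr ⟨fun h => hzne (by rw [h]), hwU⟩, rfl⟩
    have hγ : (cols U').card + 1 = (cols U).card := by
      rw [hcols']
      exact Finset.card_erase_add_one (Finset.mem_image.mpr ⟨u, hu, rfl⟩)
    exact ⟨by omega, fun heq => absurd heq (by omega)⟩

lemma exists_pair {α : Type*} [DecidableEq α] {s : Finset α} {x : α}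
    (h2 : s.card = 2) (hx : x ∈ s) : ∃ y ∈ s, y ≠ x ∧ s = {x, y} := by
  obtain ⟨p, r, hpr, rfl⟩ := Finset.card_eq_two.mp h2
  rcases Finset.mem_insert.mp hx with rfl | hx
  · exact ⟨r, by simp, fun h => hpr h.symm, rfl⟩
  · rw [Finset.mem_singleton] at hx
    subst hx
    exact ⟨p, by simp, hpr, Finset.pair_comm p x⟩

lemma case3 (U : Finset (Fin 2 → ZMod q)) (hbad : Bad U)
    (hrow2 : ∀ a ∈ rows U, (rowF U a).card = 2)
    (hcol2 : ∀ b ∈ cols U, (colF U b).card = 2)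
    (IH : ∀ V : Finset (Fin 2 → ZMod q), V.card < U.card → Bad V → Concl V) : Concl U := by
  rcases U.eq_empty_or_nonempty with rfl | ⟨u₁, hu₁⟩
  · exact ⟨by simp, by simp [rows, cols]⟩
  · obtain ⟨u₂, hu₂row, hu₂ne, hrowEq⟩ :=
      exists_pair (hrow2 _ (Finset.mem_image.mpr ⟨u₁, hu₁, rfl⟩))
        (Finset.mem_filter.mpr ⟨hu₁, rfl⟩ : u₁ ∈ rowF U (u₁ 0))
    have hu₂U : u₂ ∈ U := (Finset.mem_filter.mp hu₂row).1
    have hu₂0 : u₂ 0 = u₁ 0 := (Finset.mem_filter.mp hu₂row).2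
    have hbb' : u₂ 1 ≠ u₁ 1 := fun h => hu₂ne (ext2 hu₂0 h)
    obtain ⟨v₁, hv₁col, hv₁ne, hcolEq⟩ :=
      exists_pair (hcol2 _ (Finset.mem_image.mpr ⟨u₁, hu₁, rfl⟩))
        (Finset.mem_filter.mpr ⟨hu₁, rfl⟩ : u₁ ∈ colF U (u₁ 1))
    have hv₁U : v₁ ∈ U := (Finset.mem_filter.mp hv₁col).1
    have hv₁1 : v₁ 1 = u₁ 1 := (Finset.mem_filter.mp hv₁col).2
    have hx : v₁ 0 ≠ u₁ 0 := fun h => hv₁ne (ext2 h hv₁1)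
    obtain ⟨v₂, hv₂row, hv₂ne, hrowxEq⟩ :=
      exists_pair (hrow2 _ (Finset.mem_image.mpr ⟨v₁, hv₁U, rfl⟩))
        (Finset.mem_filter.mpr ⟨hv₁U, rfl⟩ : v₁ ∈ rowF U (v₁ 0))
    have hv₂U : v₂ ∈ U := (Finset.mem_filter.mp hv₂row).1
    have hv₂0 : v₂ 0 = v₁ 0 := (Finset.mem_filter.mp hv₂row).2
    have hcne : v₂ 1 ≠ v₁ 1 := fun h => hv₂ne (ext2 hv₂0 h)
    -- the square-closing claim
    have hkey : v₂ 1 = u₂ 1 := by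
      by_contra hne
      obtain ⟨w₂, hw₂col, hw₂ne, _⟩ :=
        exists_pair (hcol2 _ (Finset.mem_image.mpr ⟨u₂, hu₂U, rfl⟩))
          (Finset.mem_filter.mpr ⟨hu₂U, rfl⟩ : u₂ ∈ colF U (u₂ 1))
      have hw₂U : w₂ ∈ U := (Finset.mem_filter.mp hw₂col).1
      have hw₂1 : w₂ 1 = u₂ 1 := (Finset.mem_filter.mp hw₂col).2
      have hx' : w₂ 0 ≠ u₂ 0 := fun h => hw₂ne (ext2 h hw₂1)
      have hx'x : w₂ 0 ≠ v₁ 0 := by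
        intro h
        have hmem : w₂ ∈ rowF U (v₁ 0) := Finset.mem_filter.mpr ⟨hw₂U, h⟩
        rw [hrowxEq] at hmem
        rcases Finset.mem_insert.mp hmem with rfl | hmem
        · exact hbb' (by rw [← hw₂1, hv₁1])
        · rw [Finset.mem_singleton] at hmem
          exact hne (by rw [← hmem, hw₂1])
      refine hbad u₂ hu₂U v₁ hv₁U (fun h => hx (by rw [← h, hu₂0]))
        ⟨⟨u₁, hu₁, adj_of_row hu₂0.symm (fun h => hbb' h.symm),
            adj_of_col (fun h => hx h.symm) hv₁1.symm⟩,
         ⟨w₂, hw₂U, adj_of_col hx' hw₂1,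
            not_adj_diag hx'x (fun h => hbb' (by rw [← hw₂1, h, hv₁1]))⟩,
         ⟨v₂, hv₂U, not_adj_diag (fun h => hx (by rw [← hv₂0, h, hu₂0])) hne,
            adj_of_row hv₂0 hcne⟩,
         ⟨u₂, hu₂U, adj_irrefl u₂,
            not_adj_diag (by rw [hu₂0]; exact fun h => hx h.symm)
              (by rw [hv₁1]; exact hbb')⟩⟩
    -- the second column is also a square column
    have hcolb' : ({u₂, v₂} : Finset (Fin 2 → ZMod q)) = colF U (u₂ 1) := by
      refine Finset.eq_of_subset_of_card_le ?_ ?_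
      · intro w hw
        rcases Finset.mem_insert.mp hw with rfl | hw
        · exact Finset.mem_filter.mpr ⟨hu₂U, rfl⟩
        · rw [Finset.mem_singleton] at hw
          subst hw
          exact Finset.mem_filter.mpr ⟨hv₂U, hkey⟩
      · rw [Finset.card_pair (fun h => hx (by rw [← hv₂0, ← h, hu₂0])),
          hcol2 _ (Finset.mem_image.mpr ⟨u₂, hu₂U, rfl⟩)]
    -- distinctness and the square S
    have hne12 : u₁ ≠ u₂ := fun h => hu₂ne h.symm
    have hne13 : u₁ ≠ v₁ := fun h => hv₁ne h.symm
    have hne14 : u₁ ≠ v₂ := fun h => hx (by rw [← hv₂0, ← h])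
    have hne23 : u₂ ≠ v₁ := fun h => hx (by rw [← h, hu₂0])
    have hne24 : u₂ ≠ v₂ := fun h => hx (by rw [← hv₂0, ← h, hu₂0])
    have hne34 : v₁ ≠ v₂ := fun h => hv₂ne h.symm
    set S : Finset (Fin 2 → ZMod q) := {u₁, u₂, v₁, v₂} with hS
    have hScard : S.card = 4 := by
      rw [hS, Finset.card_insert_of_notMem (by simp [hne12, hne13, hne14]),
        Finset.card_insert_of_notMem (by simp [hne23, hne24]), Finset.card_pair hne34]
    have hSsub : S ⊆ U := by
      rw [hS]
      simp only [Finset.insert_subset_iff, Finset.singleton_subset_iff]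
      exact ⟨hu₁, hu₂U, hv₁U, hv₂U⟩
    have hSrows : ∀ w ∈ S, w 0 = u₁ 0 ∨ w 0 = v₁ 0 := by
      intro w hw
      rw [hS] at hw
      rcases Finset.mem_insert.mp hw with rfl | hw
      · exact Or.inl rfl
      rcases Finset.mem_insert.mp hw with rfl | hw
      · exact Or.inl hu₂0
      rcases Finset.mem_insert.mp hw with rfl | hw
      · exact Or.inr rfl
      · rw [Finset.mem_singleton] at hw
        subst hw
        exact Or.inr hv₂0
    have hScols : ∀ w ∈ S, w 1 = u₁ 1 ∨ w 1 = u₂ 1 := by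
      intro w hw
      rw [hS] at hw
      rcases Finset.mem_insert.mp hw with rfl | hw
      · exact Or.inl rfl
      rcases Finset.mem_insert.mp hw with rfl | hw
      · exact Or.inr rfl
      rcases Finset.mem_insert.mp hw with rfl | hw
      · exact Or.inl hv₁1
      · rw [Finset.mem_singleton] at hw
        subst hw
        exact Or.inr hkey
    set U' : Finset (Fin 2 → ZMod q) := U \ S with hU'
    have hcardsplit : U'.card + 4 = U.card := by
      have h1 := Finset.card_sdiff_of_subset hSsub
      have h2 := Finset.card_le_card hSsub
      rw [← hU'] at h1
      omega
    -- rows of U'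
    have hrowsU' : rows U' = (rows U) \ {u₁ 0, v₁ 0} := by
      ext z
      constructor
      · intro hz
        obtain ⟨w, hw, rfl⟩ := Finset.mem_image.mp hz
        obtain ⟨hwU, hwS⟩ := Finset.mem_sdiff.mp hw
        refine Finset.mem_sdiff.mpr ⟨Finset.mem_image.mpr ⟨w, hwU, rfl⟩, ?_⟩
        intro hmem
        rcases Finset.mem_insert.mp hmem with h | h
        · have : w ∈ rowF U (u₁ 0) := Finset.mem_filter.mpr ⟨hwU, h⟩
          rw [hrowEq] at this
          rcases Finset.mem_insert.mp this with rfl | this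
          · exact hwS (by rw [hS]; simp)
          · rw [Finset.mem_singleton] at this
            subst this
            exact hwS (by rw [hS]; simp)
        · rw [Finset.mem_singleton] at h
          have : w ∈ rowF U (v₁ 0) := Finset.mem_filter.mpr ⟨hwU, h⟩
          rw [hrowxEq] at this
          rcases Finset.mem_insert.mp this with rfl | this
          · exact hwS (by rw [hS]; simp)
          · rw [Finset.mem_singleton] at this
            subst this
            exact hwS (by rw [hS]; simp)
      · intro hz
        obtain ⟨hz, hzn⟩ := Finset.mem_sdiff.mp hz
        obtain ⟨w, hwU, rfl⟩ := Finset.mem_image.mp hz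
        refine Finset.mem_image.mpr ⟨w, Finset.mem_sdiff.mpr ⟨hwU, ?_⟩, rfl⟩
        intro hwS
        rcases hSrows w hwS with h | h <;> exact hzn (by rw [h]; simp)
    have hcolsU' : cols U' = (cols U) \ {u₁ 1, u₂ 1} := by
      ext z
      constructor
      · intro hz
        obtain ⟨w, hw, rfl⟩ := Finset.mem_image.mp hz
        obtain ⟨hwU, hwS⟩ := Finset.mem_sdiff.mp hw
        refine Finset.mem_sdiff.mpr ⟨Finset.mem_image.mpr ⟨w, hwU, rfl⟩, ?_⟩
        intro hmem
        rcases Finset.mem_insert.mp hmem with h | h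
        · have : w ∈ colF U (u₁ 1) := Finset.mem_filter.mpr ⟨hwU, h⟩
          rw [hcolEq] at this
          rcases Finset.mem_insert.mp this with rfl | this
          · exact hwS (by rw [hS]; simp)
          · rw [Finset.mem_singleton] at this
            subst this
            exact hwS (by rw [hS]; simp)
        · rw [Finset.mem_singleton] at h
          have : w ∈ colF U (u₂ 1) := Finset.mem_filter.mpr ⟨hwU, h⟩
          rw [← hcolb'] at this
          rcases Finset.mem_insert.mp this with rfl | this
          · exact hwS (by rw [hS]; simp)
          · rw [Finset.mem_singleton] at this
            subst this
            exact hwS (by rw [hS]; simp)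
      · intro hz
        obtain ⟨hz, hzn⟩ := Finset.mem_sdiff.mp hz
        obtain ⟨w, hwU, rfl⟩ := Finset.mem_image.mp hz
        refine Finset.mem_image.mpr ⟨w, Finset.mem_sdiff.mpr ⟨hwU, ?_⟩, rfl⟩
        intro hwS
        rcases hScols w hwS with h | h <;> exact hzn (by rw [h]; simp)
    have hrsub : ({u₁ 0, v₁ 0} : Finset (ZMod q)) ⊆ rows U := by
      intro z hz
      rcases Finset.mem_insert.mp hz with rfl | hz
      · exact Finset.mem_image.mpr ⟨u₁, hu₁, rfl⟩
      · rw [Finset.mem_singleton] at hz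
        subst hz
        exact Finset.mem_image.mpr ⟨v₁, hv₁U, rfl⟩
    have hcsub : ({u₁ 1, u₂ 1} : Finset (ZMod q)) ⊆ cols U := by
      intro z hz
      rcases Finset.mem_insert.mp hz with rfl | hz
      · exact Finset.mem_image.mpr ⟨u₁, hu₁, rfl⟩
      · rw [Finset.mem_singleton] at hz
        subst hz
        exact Finset.mem_image.mpr ⟨u₂, hu₂U, rfl⟩
    have hρ : (rows U').card + 2 = (rows U).card := by
      have h1 := Finset.card_sdiff_of_subset hrsub
      have h2 := Finset.card_le_card hrsub
      have h3 : ({u₁ 0, v₁ 0} : Finset (ZMod q)).card = 2 :=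
        Finset.card_pair (fun h => hx h.symm)
      rw [← hrowsU'] at h1
      omega
    have hγ : (cols U').card + 2 = (cols U).card := by
      have h1 := Finset.card_sdiff_of_subset hcsub
      have h2 := Finset.card_le_card hcsub
      have h3 : ({u₁ 1, u₂ 1} : Finset (ZMod q)).card = 2 :=
        Finset.card_pair (fun h => hbb' h.symm)
      rw [← hcolsU'] at h1
      omega
    -- all lines of U' have exactly two points
    have hrow2' : ∀ z ∈ rows U', (rowF U' z).card = 2 := by
      intro z hz
      rw [hrowsU'] at hz
      obtain ⟨hzU, hzn⟩ := Finset.mem_sdiff.mp hz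
      have heqf : rowF U' z = rowF U z := by
        ext w
        constructor
        · intro hw
          obtain ⟨hw1, hw2⟩ := Finset.mem_filter.mp hw
          exact Finset.mem_filter.mpr ⟨(Finset.mem_sdiff.mp hw1).1, hw2⟩
        · intro hw
          obtain ⟨hw1, hw2⟩ := Finset.mem_filter.mp hw
          refine Finset.mem_filter.mpr ⟨Finset.mem_sdiff.mpr ⟨hw1, ?_⟩, hw2⟩
          intro hwS
          rcases hSrows w hwS with h | h <;> exact hzn (by rw [← hw2, h]; simp)
      rw [heqf]
      exact hrow2 z hzU
    have hcol2' : ∀ z ∈ cols U', (colF U' z).card = 2 := by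
      intro z hz
      rw [hcolsU'] at hz
      obtain ⟨hzU, hzn⟩ := Finset.mem_sdiff.mp hz
      have heqf : colF U' z = colF U z := by
        ext w
        constructor
        · intro hw
          obtain ⟨hw1, hw2⟩ := Finset.mem_filter.mp hw
          exact Finset.mem_filter.mpr ⟨(Finset.mem_sdiff.mp hw1).1, hw2⟩
        · intro hw
          obtain ⟨hw1, hw2⟩ := Finset.mem_filter.mp hw
          refine Finset.mem_filter.mpr ⟨Finset.mem_sdiff.mpr ⟨hw1, ?_⟩, hw2⟩
          intro hwS
          rcases hScols w hwS with h | h <;> exact hzn (by rw [← hw2, h]; simp)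
      rw [heqf]
      exact hcol2 z hzU
    -- counting U'
    have hcount1 : U'.card = 2 * (rows U').card := by
      rw [Finset.card_eq_sum_card_fiberwise
        (f := fun w => w 0) (t := rows U') (fun x hx => Finset.mem_image.mpr ⟨x, hx, rfl⟩)]
      have hc : ∑ b ∈ rows U', (Finset.filter (fun a => a 0 = b) U').card
          = ∑ _b ∈ rows U', 2 := by
        refine Finset.sum_congr rfl ?_
        intro z hz
        exact hrow2' z hz
      rw [hc, Finset.sum_const, smul_eq_mul, mul_comm]
    have hcount2 : U'.card = 2 * (cols U').card := by
      rw [Finset.card_eq_sum_card_fiberwise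
        (f := fun w => w 1) (t := cols U') (fun x hx => Finset.mem_image.mpr ⟨x, hx, rfl⟩)]
      have hc : ∑ b ∈ cols U', (Finset.filter (fun a => a 1 = b) U').card
          = ∑ _b ∈ cols U', 2 := by
        refine Finset.sum_congr rfl ?_
        intro z hz
        exact hcol2' z hz
      rw [hc, Finset.sum_const, smul_eq_mul, mul_comm]
    have hlt : U'.card < U.card := by omega
    obtain ⟨hI1, hI2⟩ := IH U' hlt (bad_subset (by rw [hU']; exact Finset.sdiff_subset) hbad)
    have heq' : U'.card = (rows U').card + (cols U').card := by omega
    obtain ⟨hev1, hev2, _, _⟩ := hI2 heq'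
    refine ⟨by omega, fun _ => ⟨?_, ?_, hrow2, hcol2⟩⟩
    · have h : (rows U).card = (rows U').card + 2 := by omega
      rw [h]
      exact hev1.add even_two
    · have h : (cols U).card = (cols U').card + 2 := by omega
      rw [h]
      exact hev2.add even_two

theorem mainP : ∀ (n : ℕ) (U : Finset (Fin 2 → ZMod q)), U.card ≤ n → Bad U → Concl U := by
  intro n
  induction n with
  | zero =>
    intro U hc _
    have : U = ∅ := Finset.card_eq_zero.mp (Nat.le_zero.mp hc)
    subst this
    exact ⟨by simp, by simp [rows, cols]⟩
  | succ n ih =>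
    intro U hc hbad
    have IH : ∀ V : Finset (Fin 2 → ZMod q), V.card < U.card → Bad V → Concl V :=
      fun V hV hbV => ih V (by omega) hbV
    by_cases h3r : ∃ a, 3 ≤ (rowF U a).card
    · obtain ⟨a, h3⟩ := h3r
      have hs := case1 U hbad a h3 (fun V hV hb => (IH V hV hb).1)
      exact ⟨by omega, fun heq => absurd heq (by omega)⟩
    · by_cases h3c : ∃ b, 3 ≤ (colF U b).card
      · obtain ⟨b, h3⟩ := h3c
        apply concl_tr
        have hb' : Bad (U.image tr) := bad_tr hbad
        have h3' : 3 ≤ (rowF (U.image tr) b).card := by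
          rw [rowF_tr, Finset.card_image_of_injective _ tr_inj]
          exact h3
        have hs := case1 (U.image tr) hb' b h3'
          (fun V hV hb =>
            (IH V (by rwa [Finset.card_image_of_injective _ tr_inj] at hV) hb).1)
        exact ⟨by omega, fun heq => absurd heq (by omega)⟩
      · push_neg at h3r h3c
        have hcolle : ∀ b, (colF U b).card ≤ 2 := fun b => by have := h3c b; omega
        have hrowle : ∀ a, (rowF U a).card ≤ 2 := fun a => by have := h3r a; omega
        by_cases h1r : ∃ a ∈ rows U, (rowF U a).card = 1
        · obtain ⟨a, _, h1⟩ := h1r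
          obtain ⟨u, hu⟩ := Finset.card_eq_one.mp h1
          have huU : u ∈ U ∧ u 0 = a := by
            have : u ∈ rowF U a := by rw [hu]; exact Finset.mem_singleton_self u
            exact Finset.mem_filter.mp this
          have hrow1 : ∀ w ∈ U, w 0 = u 0 → w = u := by
            intro w hw hw0
            have : w ∈ rowF U a := Finset.mem_filter.mpr ⟨hw, by rw [hw0, huU.2]⟩
            rw [hu] at this
            exact Finset.mem_singleton.mp this
          exact case2 U hbad hcolle u huU.1 hrow1 IH
        · by_cases h1c : ∃ b ∈ cols U, (colF U b).card = 1
          · obtain ⟨b, _, h1⟩ := h1c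
            obtain ⟨u, hu⟩ := Finset.card_eq_one.mp h1
            have huU : u ∈ U ∧ u 1 = b := by
              have : u ∈ colF U b := by rw [hu]; exact Finset.mem_singleton_self u
              exact Finset.mem_filter.mp this
            have hcol1 : ∀ w ∈ U, w 1 = u 1 → w = u := by
              intro w hw hw1
              have : w ∈ colF U b := Finset.mem_filter.mpr ⟨hw, by rw [hw1, huU.2]⟩
              rw [hu] at this
              exact Finset.mem_singleton.mp this
            apply concl_tr
            have hcolle' : ∀ z, (colF (U.image tr) z).card ≤ 2 := by
              intro z
              rw [colF_tr, Finset.card_image_of_injective _ tr_inj]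
              exact hrowle z
            have hrow1' : ∀ w ∈ U.image tr, w 0 = tr u 0 → w = tr u := by
              intro w hw hw0
              obtain ⟨w', hw', rfl⟩ := Finset.mem_image.mp hw
              rw [tr0, tr0] at hw0
              rw [hcol1 w' hw' hw0]
            exact case2 (U.image tr) (bad_tr hbad) hcolle'
              (tr u) (Finset.mem_image.mpr ⟨u, huU.1, rfl⟩) hrow1'
              (fun V hV hb =>
                IH V (by rwa [Finset.card_image_of_injective _ tr_inj] at hV) hb)
          · push_neg at h1r h1c
            have hrow2 : ∀ a ∈ rows U, (rowF U a).card = 2 := by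
              intro a ha
              obtain ⟨w, hw, hw0⟩ := Finset.mem_image.mp ha
              have hpos : 0 < (rowF U a).card :=
                Finset.card_pos.mpr ⟨w, Finset.mem_filter.mpr ⟨hw, hw0⟩⟩
              have := h3r a
              have := h1r a ha
              omega
            have hcol2 : ∀ b ∈ cols U, (colF U b).card = 2 := by
              intro b hb
              obtain ⟨w, hw, hw1⟩ := Finset.mem_image.mp hb
              have hpos : 0 < (colF U b).card :=
                Finset.card_pos.mpr ⟨w, Finset.mem_filter.mpr ⟨hw, hw1⟩⟩
              have := h3c b
              have := h1c b hb
              omega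
            exact case3 U hbad hrow2 hcol2 IH

/-- if `q ≥ 3` is odd and `U ⊆ V(H(2,q))` has `|U| ≥ 2q`,
then the VC-dimension of `(U, n(U))` is at least 2. -/
theorem vc_dim_ge_two_of_card_odd (q : ℕ) (hq : 3 ≤ q) (hodd : Odd q)
    (U : Finset (Fin 2 → ZMod q)) (hU : 2 * q ≤ U.card) :
    ∃ W ⊆ U, W.card = 2 ∧ Shatters 1 U W := by
  by_contra hcon
  push_neg at hcon
  have hbad : Bad U := by
    intro w₁ h₁ w₂ h₂ hne hw
    obtain ⟨W, hWU, hWcard, hWsh⟩ := shatters_of_witnesses h₁ h₂ hne hw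
    exact hcon W hWU hWcard hWsh
  haveI : NeZero q := ⟨by omega⟩
  obtain ⟨hle, hclause⟩ := mainP U.card U le_rfl hbad
  have hρq : (rows U).card ≤ q := by
    have h := Finset.card_le_univ (rows U)
    rwa [ZMod.card] at h
  have hγq : (cols U).card ≤ q := by
    have h := Finset.card_le_univ (cols U)
    rwa [ZMod.card] at h
  have heq : U.card = (rows U).card + (cols U).card := by omega
  obtain ⟨hev, _, _, _⟩ := hclause heq
  have hq' : (rows U).card = q := by omega
  rw [hq'] at hev
  exact (Nat.not_even_iff_odd.mpr hodd) hev
end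

section
/- Let q ≥ 4 be a natural number, and let U be a subset of the vertices of the Hamming graph H(2,q) with |U| ≥ 3q + 1. Then the VC-dimension of (U, n(U)) is exactly 3. -/
namespace VCaux

variable {q : ℕ}

lemma fin2_cases (i j k : Fin 2) (hij : i ≠ j) : k = i ∨ k = j := by
  fin_cases i <;> fin_cases j <;> fin_cases k <;> simp_all

lemma pt_eq_iff {i j : Fin 2} (hij : i ≠ j) {x y : Fin 2 → ZMod q} :
    x = y ↔ x i = y i ∧ x j = y j := by
  constructor
  · rintro rfl; exact ⟨rfl, rfl⟩
  · rintro ⟨h1, h2⟩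
    funext k
    rcases fin2_cases i j k hij with rfl | rfl <;> assumption

lemma adj01 {x y : Fin 2 → ZMod q} :
    hammingAdj 1 x y ↔ (x 0 = y 0 ∧ x 1 ≠ y 1) ∨ (x 0 ≠ y 0 ∧ x 1 = y 1) := by
  unfold hammingAdj
  rw [Finset.card_filter, Fin.sum_univ_two]
  by_cases h0 : x 0 = y 0 <;> by_cases h1 : x 1 = y 1 <;> simp [h0, h1]

lemma adj_iff {i j : Fin 2} (hij : i ≠ j) {x y : Fin 2 → ZMod q} :
    hammingAdj 1 x y ↔ (x i = y i ∧ x j ≠ y j) ∨ (x i ≠ y i ∧ x j = y j) := by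
  fin_cases i <;> fin_cases j <;> simp_all [adj01] <;> tauto

lemma adj_of_eq_ne {i j : Fin 2} (hij : i ≠ j) {x y : Fin 2 → ZMod q}
    (h : x i = y i) (h' : x j ≠ y j) : hammingAdj 1 x y :=
  (adj_iff hij).2 (Or.inl ⟨h, h'⟩)

lemma adj_of_ne_eq {i j : Fin 2} (hij : i ≠ j) {x y : Fin 2 → ZMod q}
    (h : x i ≠ y i) (h' : x j = y j) : hammingAdj 1 x y :=
  (adj_iff hij).2 (Or.inr ⟨h, h'⟩)

lemma not_adj_of_ne_ne {i j : Fin 2} (hij : i ≠ j) {x y : Fin 2 → ZMod q}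
    (h : x i ≠ y i) (h' : x j ≠ y j) : ¬ hammingAdj 1 x y := by
  rw [adj_iff hij]; rintro (⟨h1, h2⟩ | ⟨h1, h2⟩) <;> contradiction

lemma not_adj_of_eq_eq {i j : Fin 2} (hij : i ≠ j) {x y : Fin 2 → ZMod q}
    (h : x i = y i) (h' : x j = y j) : ¬ hammingAdj 1 x y := by
  rw [adj_iff hij]; rintro (⟨h1, h2⟩ | ⟨h1, h2⟩) <;> contradiction

/-- STAR configuration: 4 points in a "row" `a` (direction `i`), off-row points in
3 of the columns, and an off-row point avoiding all 3 columns. -/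
lemma star {i j : Fin 2} (hij : i ≠ j) {U : Finset (Fin 2 → ZMod q)}
    {a : ZMod q} {w1 w2 w3 wt v1 v2 v3 v0 : Fin 2 → ZMod q}
    (hw1U : w1 ∈ U) (hw2U : w2 ∈ U) (hw3U : w3 ∈ U) (hwtU : wt ∈ U)
    (hv1U : v1 ∈ U) (hv2U : v2 ∈ U) (hv3U : v3 ∈ U) (hv0U : v0 ∈ U)
    (hw1i : w1 i = a) (hw2i : w2 i = a) (hw3i : w3 i = a) (hwti : wt i = a)
    (h12 : w1 j ≠ w2 j) (h13 : w1 j ≠ w3 j) (h23 : w2 j ≠ w3 j)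
    (ht1 : wt j ≠ w1 j) (ht2 : wt j ≠ w2 j) (ht3 : wt j ≠ w3 j)
    (hv1i : v1 i ≠ a) (hv1j : v1 j = w1 j)
    (hv2i : v2 i ≠ a) (hv2j : v2 j = w2 j)
    (hv3i : v3 i ≠ a) (hv3j : v3 j = w3 j)
    (hv0i : v0 i ≠ a) (hv01 : v0 j ≠ w1 j) (hv02 : v0 j ≠ w2 j) (hv03 : v0 j ≠ w3 j) :
    ∃ W ⊆ U, W.card = 3 ∧ Shatters 1 U W := by
  have hne12 : w1 ≠ w2 := fun h => h12 (by rw [h])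
  have hne13 : w1 ≠ w3 := fun h => h13 (by rw [h])
  have hne23 : w2 ≠ w3 := fun h => h23 (by rw [h])
  refine ⟨{w1, w2, w3}, ?_, ?_, ?_⟩
  · intro x hx
    simp only [Finset.mem_insert, Finset.mem_singleton] at hx
    rcases hx with rfl | rfl | rfl <;> assumption
  · rw [Finset.card_insert_of_notMem (by simp [hne12, hne13]),
      Finset.card_insert_of_notMem (by simp [hne23]), Finset.card_singleton]
  · intro S hS
    have hmem : ∀ w ∈ ({w1, w2, w3} : Finset (Fin 2 → ZMod q)),
        w = w1 ∨ w = w2 ∨ w = w3 := by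
      intro w hw
      simpa only [Finset.mem_insert, Finset.mem_singleton] using hw
    by_cases h1 : w1 ∈ S <;> by_cases h2 : w2 ∈ S <;> by_cases h3 : w3 ∈ S
    · -- TTT : wt
      refine ⟨wt, hwtU, fun w hw => ?_⟩
      rcases hmem w hw with rfl | rfl | rfl
      · exact iff_of_true h1 (adj_of_eq_ne hij (hwti.trans hw1i.symm) ht1)
      · exact iff_of_true h2 (adj_of_eq_ne hij (hwti.trans hw2i.symm) ht2)
      · exact iff_of_true h3 (adj_of_eq_ne hij (hwti.trans hw3i.symm) ht3)
    · -- TTF : w3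
      refine ⟨w3, hw3U, fun w hw => ?_⟩
      rcases hmem w hw with rfl | rfl | rfl
      · exact iff_of_true h1 (adj_of_eq_ne hij (hw3i.trans hw1i.symm) (Ne.symm h13))
      · exact iff_of_true h2 (adj_of_eq_ne hij (hw3i.trans hw2i.symm) (Ne.symm h23))
      · exact iff_of_false h3 (not_adj_of_eq_eq hij rfl rfl)
    · -- TFT : w2
      refine ⟨w2, hw2U, fun w hw => ?_⟩
      rcases hmem w hw with rfl | rfl | rfl
      · exact iff_of_true h1 (adj_of_eq_ne hij (hw2i.trans hw1i.symm) (Ne.symm h12))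
      · exact iff_of_false h2 (not_adj_of_eq_eq hij rfl rfl)
      · exact iff_of_true h3 (adj_of_eq_ne hij (hw2i.trans hw3i.symm) h23)
    · -- TFF : v1
      refine ⟨v1, hv1U, fun w hw => ?_⟩
      rcases hmem w hw with rfl | rfl | rfl
      · exact iff_of_true h1 (adj_of_ne_eq hij (by rw [hw1i]; exact hv1i) hv1j)
      · exact iff_of_false h2
          (not_adj_of_ne_ne hij (by rw [hw2i]; exact hv1i) (by rw [hv1j]; exact h12))
      · exact iff_of_false h3
          (not_adj_of_ne_ne hij (by rw [hw3i]; exact hv1i) (by rw [hv1j]; exact h13))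
    · -- FTT : w1
      refine ⟨w1, hw1U, fun w hw => ?_⟩
      rcases hmem w hw with rfl | rfl | rfl
      · exact iff_of_false h1 (not_adj_of_eq_eq hij rfl rfl)
      · exact iff_of_true h2 (adj_of_eq_ne hij (hw1i.trans hw2i.symm) h12)
      · exact iff_of_true h3 (adj_of_eq_ne hij (hw1i.trans hw3i.symm) h13)
    · -- FTF : v2
      refine ⟨v2, hv2U, fun w hw => ?_⟩
      rcases hmem w hw with rfl | rfl | rfl
      · exact iff_of_false h1
          (not_adj_of_ne_ne hij (by rw [hw1i]; exact hv2i) (by rw [hv2j]; exact Ne.symm h12))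
      · exact iff_of_true h2 (adj_of_ne_eq hij (by rw [hw2i]; exact hv2i) hv2j)
      · exact iff_of_false h3
          (not_adj_of_ne_ne hij (by rw [hw3i]; exact hv2i) (by rw [hv2j]; exact h23))
    · -- FFT : v3
      refine ⟨v3, hv3U, fun w hw => ?_⟩
      rcases hmem w hw with rfl | rfl | rfl
      · exact iff_of_false h1
          (not_adj_of_ne_ne hij (by rw [hw1i]; exact hv3i) (by rw [hv3j]; exact Ne.symm h13))
      · exact iff_of_false h2
          (not_adj_of_ne_ne hij (by rw [hw2i]; exact hv3i) (by rw [hv3j]; exact Ne.symm h23))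
      · exact iff_of_true h3 (adj_of_ne_eq hij (by rw [hw3i]; exact hv3i) hv3j)
    · -- FFF : v0
      refine ⟨v0, hv0U, fun w hw => ?_⟩
      rcases hmem w hw with rfl | rfl | rfl
      · exact iff_of_false h1 (not_adj_of_ne_ne hij (by rw [hw1i]; exact hv0i) hv01)
      · exact iff_of_false h2 (not_adj_of_ne_ne hij (by rw [hw2i]; exact hv0i) hv02)
      · exact iff_of_false h3 (not_adj_of_ne_ne hij (by rw [hw3i]; exact hv0i) hv03)

/-- GRID configuration: two "columns" `p ≠ p'` (direction `j`) each containing points in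
the same four rows `x1,x2,x3,x4`. -/
lemma grid {i j : Fin 2} (hij : i ≠ j) {U : Finset (Fin 2 → ZMod q)}
    {p p' x1 x2 x3 x4 : ZMod q} {g1 g2 g3 g4 k1 k2 k3 k4 : Fin 2 → ZMod q}
    (hpp : p ≠ p')
    (hx12 : x1 ≠ x2) (hx13 : x1 ≠ x3) (hx14 : x1 ≠ x4)
    (hx23 : x2 ≠ x3) (hx24 : x2 ≠ x4) (hx34 : x3 ≠ x4)
    (hg1U : g1 ∈ U) (hg2U : g2 ∈ U) (hg3U : g3 ∈ U) (hg4U : g4 ∈ U)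
    (hk1U : k1 ∈ U) (hk2U : k2 ∈ U) (hk3U : k3 ∈ U) (hk4U : k4 ∈ U)
    (hg1i : g1 i = x1) (hg1j : g1 j = p) (hg2i : g2 i = x2) (hg2j : g2 j = p)
    (hg3i : g3 i = x3) (hg3j : g3 j = p) (hg4i : g4 i = x4) (hg4j : g4 j = p)
    (hk1i : k1 i = x1) (hk1j : k1 j = p') (hk2i : k2 i = x2) (hk2j : k2 j = p')
    (hk3i : k3 i = x3) (hk3j : k3 j = p') (hk4i : k4 i = x4) (hk4j : k4 j = p') :
    ∃ W ⊆ U, W.card = 3 ∧ Shatters 1 U W := by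
  have e12 : g1 ≠ g2 := fun h => hx12 (by rw [← hg1i, ← hg2i, h])
  have e13 : g1 ≠ k3 := fun h => hpp (by rw [← hg1j, ← hk3j, h])
  have e23 : g2 ≠ k3 := fun h => hpp (by rw [← hg2j, ← hk3j, h])
  refine ⟨{g1, g2, k3}, ?_, ?_, ?_⟩
  · intro x hx
    simp only [Finset.mem_insert, Finset.mem_singleton] at hx
    rcases hx with rfl | rfl | rfl <;> assumption
  · rw [Finset.card_insert_of_notMem (by simp [e12, e13]),
      Finset.card_insert_of_notMem (by simp [e23]), Finset.card_singleton]
  · intro S hS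
    have hmem : ∀ w ∈ ({g1, g2, k3} : Finset (Fin 2 → ZMod q)),
        w = g1 ∨ w = g2 ∨ w = k3 := by
      intro w hw
      simpa only [Finset.mem_insert, Finset.mem_singleton] using hw
    by_cases h1 : g1 ∈ S <;> by_cases h2 : g2 ∈ S <;> by_cases h3 : k3 ∈ S
    · -- TTT : g3
      refine ⟨g3, hg3U, fun w hw => ?_⟩
      rcases hmem w hw with rfl | rfl | rfl
      · exact iff_of_true h1 (adj_of_ne_eq hij (by rw [hg3i, hg1i]; exact Ne.symm hx13)
          (hg3j.trans hg1j.symm))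
      · exact iff_of_true h2 (adj_of_ne_eq hij (by rw [hg3i, hg2i]; exact Ne.symm hx23)
          (hg3j.trans hg2j.symm))
      · exact iff_of_true h3 (adj_of_eq_ne hij (hg3i.trans hk3i.symm)
          (by rw [hg3j, hk3j]; exact hpp))
    · -- TTF : g4
      refine ⟨g4, hg4U, fun w hw => ?_⟩
      rcases hmem w hw with rfl | rfl | rfl
      · exact iff_of_true h1 (adj_of_ne_eq hij (by rw [hg4i, hg1i]; exact Ne.symm hx14)
          (hg4j.trans hg1j.symm))
      · exact iff_of_true h2 (adj_of_ne_eq hij (by rw [hg4i, hg2i]; exact Ne.symm hx24)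
          (hg4j.trans hg2j.symm))
      · exact iff_of_false h3 (not_adj_of_ne_ne hij (by rw [hg4i, hk3i]; exact Ne.symm hx34)
          (by rw [hg4j, hk3j]; exact hpp))
    · -- TFT : k1
      refine ⟨k1, hk1U, fun w hw => ?_⟩
      rcases hmem w hw with rfl | rfl | rfl
      · exact iff_of_true h1 (adj_of_eq_ne hij (hk1i.trans hg1i.symm)
          (by rw [hk1j, hg1j]; exact Ne.symm hpp))
      · exact iff_of_false h2 (not_adj_of_ne_ne hij (by rw [hk1i, hg2i]; exact hx12)
          (by rw [hk1j, hg2j]; exact Ne.symm hpp))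
      · exact iff_of_true h3 (adj_of_ne_eq hij (by rw [hk1i, hk3i]; exact hx13)
          (hk1j.trans hk3j.symm))
    · -- TFF : g2
      refine ⟨g2, hg2U, fun w hw => ?_⟩
      rcases hmem w hw with rfl | rfl | rfl
      · exact iff_of_true h1 (adj_of_ne_eq hij (by rw [hg2i, hg1i]; exact Ne.symm hx12)
          (hg2j.trans hg1j.symm))
      · exact iff_of_false h2 (not_adj_of_eq_eq hij rfl rfl)
      · exact iff_of_false h3 (not_adj_of_ne_ne hij (by rw [hg2i, hk3i]; exact hx23)
          (by rw [hg2j, hk3j]; exact hpp))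
    · -- FTT : k2
      refine ⟨k2, hk2U, fun w hw => ?_⟩
      rcases hmem w hw with rfl | rfl | rfl
      · exact iff_of_false h1 (not_adj_of_ne_ne hij (by rw [hk2i, hg1i]; exact Ne.symm hx12)
          (by rw [hk2j, hg1j]; exact Ne.symm hpp))
      · exact iff_of_true h2 (adj_of_eq_ne hij (hk2i.trans hg2i.symm)
          (by rw [hk2j, hg2j]; exact Ne.symm hpp))
      · exact iff_of_true h3 (adj_of_ne_eq hij (by rw [hk2i, hk3i]; exact hx23)
          (hk2j.trans hk3j.symm))
    · -- FTF : g1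
      refine ⟨g1, hg1U, fun w hw => ?_⟩
      rcases hmem w hw with rfl | rfl | rfl
      · exact iff_of_false h1 (not_adj_of_eq_eq hij rfl rfl)
      · exact iff_of_true h2 (adj_of_ne_eq hij (by rw [hg1i, hg2i]; exact hx12)
          (hg1j.trans hg2j.symm))
      · exact iff_of_false h3 (not_adj_of_ne_ne hij (by rw [hg1i, hk3i]; exact hx13)
          (by rw [hg1j, hk3j]; exact hpp))
    · -- FFT : k4
      refine ⟨k4, hk4U, fun w hw => ?_⟩
      rcases hmem w hw with rfl | rfl | rfl
      · exact iff_of_false h1 (not_adj_of_ne_ne hij (by rw [hk4i, hg1i]; exact Ne.symm hx14)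
          (by rw [hk4j, hg1j]; exact Ne.symm hpp))
      · exact iff_of_false h2 (not_adj_of_ne_ne hij (by rw [hk4i, hg2i]; exact Ne.symm hx24)
          (by rw [hk4j, hg2j]; exact Ne.symm hpp))
      · exact iff_of_true h3 (adj_of_ne_eq hij (by rw [hk4i, hk3i]; exact Ne.symm hx34)
          (hk4j.trans hk3j.symm))
    · -- FFF : k3
      refine ⟨k3, hk3U, fun w hw => ?_⟩
      rcases hmem w hw with rfl | rfl | rfl
      · exact iff_of_false h1 (not_adj_of_ne_ne hij (by rw [hk3i, hg1i]; exact Ne.symm hx13)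
          (by rw [hk3j, hg1j]; exact Ne.symm hpp))
      · exact iff_of_false h2 (not_adj_of_ne_ne hij (by rw [hk3i, hg2i]; exact Ne.symm hx23)
          (by rw [hk3j, hg2j]; exact Ne.symm hpp))
      · exact iff_of_false h3 (not_adj_of_eq_eq hij rfl rfl)


lemma shatters_mono {U W W' : Finset (Fin 2 → ZMod q)} (h : W' ⊆ W)
    (hs : Shatters 1 U W) : Shatters 1 U W' := by
  intro S hS
  obtain ⟨u, hu, hprop⟩ := hs S (hS.trans h)
  exact ⟨u, hu, fun w hw => hprop w (h hw)⟩

lemma upper_core {i j : Fin 2} (hij : i ≠ j) {U W' : Finset (Fin 2 → ZMod q)}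
    {u : Fin 2 → ZMod q}
    (hshat : Shatters 1 U W') (hW4 : W'.card = 4)
    (hadj : ∀ w ∈ W', hammingAdj 1 u w)
    (hA : 2 ≤ (W'.filter fun w => w i = u i).card) : False := by
  obtain ⟨w1, hw1, w2, hw2, hne12⟩ := Finset.one_lt_card.mp
    (lt_of_lt_of_le one_lt_two hA)
  rw [Finset.mem_filter] at hw1 hw2
  obtain ⟨hw1W, hw1i⟩ := hw1
  obtain ⟨hw2W, hw2i⟩ := hw2
  have hj12 : w1 j ≠ w2 j := by
    intro h
    exact hne12 ((pt_eq_iff hij).2 ⟨hw1i.trans hw2i.symm, h⟩)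
  rcases Finset.eq_empty_or_nonempty (W'.filter fun w => w i ≠ u i) with hB | hB
  · -- all of W' in the "row" of u
    have hrow : ∀ w ∈ W', w i = u i := by
      intro w hw
      by_contra hc
      exact absurd (Finset.mem_filter.2 ⟨hw, hc⟩) (by rw [hB]; exact Finset.notMem_empty w)
    have hcard2 : 2 ≤ (W' \ {w1, w2}).card := by
      have hsub : ({w1, w2} : Finset (Fin 2 → ZMod q)) ⊆ W' := by
        intro x hx
        simp only [Finset.mem_insert, Finset.mem_singleton] at hx
        rcases hx with rfl | rfl <;> assumption
      have : ({w1, w2} : Finset (Fin 2 → ZMod q)).card = 2 := by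
        rw [Finset.card_insert_of_notMem (by simp [hne12]), Finset.card_singleton]
      rw [Finset.card_sdiff_of_subset hsub, this, hW4]
    obtain ⟨w3, hw3, w4, hw4, hne34⟩ := Finset.one_lt_card.mp
      (lt_of_lt_of_le one_lt_two hcard2)
    rw [Finset.mem_sdiff] at hw3 hw4
    obtain ⟨hw3W, hw3n⟩ := hw3
    obtain ⟨hw4W, hw4n⟩ := hw4
    simp only [Finset.mem_insert, Finset.mem_singleton, not_or] at hw3n hw4n
    have hSsub : ({w1, w2} : Finset (Fin 2 → ZMod q)) ⊆ W' := by
      intro x hx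
      simp only [Finset.mem_insert, Finset.mem_singleton] at hx
      rcases hx with rfl | rfl <;> assumption
    obtain ⟨v, hvU, hprop⟩ := hshat {w1, w2} hSsub
    have hadj1 : hammingAdj 1 v w1 := (hprop w1 hw1W).1 (by simp)
    have hadj2 : hammingAdj 1 v w2 := (hprop w2 hw2W).1 (by simp)
    have hvi : v i = u i := by
      by_contra hvi
      have e1 : v j = w1 j := by
        rcases (adj_iff hij).1 hadj1 with ⟨h, _⟩ | ⟨_, h⟩
        · exact absurd (h.trans hw1i) hvi
        · exact h
      have e2 : v j = w2 j := by
        rcases (adj_iff hij).1 hadj2 with ⟨h, _⟩ | ⟨_, h⟩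
        · exact absurd (h.trans hw2i) hvi
        · exact h
      exact hj12 (e1.symm.trans e2)
    have hv3 : v j = w3 j := by
      have hn3 : ¬ hammingAdj 1 v w3 := fun hc =>
        (by simpa [hw3n.1, hw3n.2] using (hprop w3 hw3W).2 hc : False)
      by_contra hc
      exact hn3 (adj_of_eq_ne hij (hvi.trans (hrow w3 hw3W).symm) hc)
    have hv4 : v j = w4 j := by
      have hn4 : ¬ hammingAdj 1 v w4 := fun hc =>
        (by simpa [hw4n.1, hw4n.2] using (hprop w4 hw4W).2 hc : False)
      by_contra hc
      exact hn4 (adj_of_eq_ne hij (hvi.trans (hrow w4 hw4W).symm) hc)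
    exact hne34 ((pt_eq_iff hij).2
      ⟨(hrow w3 hw3W).trans (hrow w4 hw4W).symm, hv3.symm.trans hv4⟩)
  · -- some w4 off the row of u
    obtain ⟨w4, hw4⟩ := hB
    rw [Finset.mem_filter] at hw4
    obtain ⟨hw4W, hw4i⟩ := hw4
    have hw4j : w4 j = u j := by
      rcases (adj_iff hij).1 (hadj w4 hw4W) with ⟨h, _⟩ | ⟨_, h⟩
      · exact absurd h.symm hw4i
      · exact h.symm
    have hne14 : w1 ≠ w4 := fun h => hw4i (by rw [← h]; exact hw1i)
    have hne24 : w2 ≠ w4 := fun h => hw4i (by rw [← h]; exact hw2i)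
    have hSsub : ({w1, w2, w4} : Finset (Fin 2 → ZMod q)) ⊆ W' := by
      intro x hx
      simp only [Finset.mem_insert, Finset.mem_singleton] at hx
      rcases hx with rfl | rfl | rfl <;> assumption
    -- pick w3 outside {w1,w2,w4}
    have hnsub : ¬ W' ⊆ {w1, w2, w4} := by
      intro hc
      have h3 : ({w1, w2, w4} : Finset (Fin 2 → ZMod q)).card ≤ 3 := by
        apply le_trans (Finset.card_insert_le _ _)
        apply Nat.succ_le_succ
        apply le_trans (Finset.card_insert_le _ _)
        simp
      have h4 := Finset.card_le_card hc
      rw [hW4] at h4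
      exact absurd (le_trans h4 h3) (by norm_num)
    obtain ⟨w3, hw3W, hw3n⟩ := Finset.not_subset.mp hnsub
    simp only [Finset.mem_insert, Finset.mem_singleton, not_or] at hw3n
    obtain ⟨v, hvU, hprop⟩ := hshat {w1, w2, w4} hSsub
    have hadj1 : hammingAdj 1 v w1 := (hprop w1 hw1W).1 (by simp)
    have hadj2 : hammingAdj 1 v w2 := (hprop w2 hw2W).1 (by simp)
    have hadj4 : hammingAdj 1 v w4 := (hprop w4 hw4W).1 (by simp)
    have hvi : v i = u i := by
      by_contra hvi
      have e1 : v j = w1 j := by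
        rcases (adj_iff hij).1 hadj1 with ⟨h, _⟩ | ⟨_, h⟩
        · exact absurd (h.trans hw1i) hvi
        · exact h
      have e2 : v j = w2 j := by
        rcases (adj_iff hij).1 hadj2 with ⟨h, _⟩ | ⟨_, h⟩
        · exact absurd (h.trans hw2i) hvi
        · exact h
      exact hj12 (e1.symm.trans e2)
    have hvj : v j = u j := by
      rcases (adj_iff hij).1 hadj4 with ⟨h, _⟩ | ⟨_, h⟩
      · exact absurd (hvi.symm.trans h).symm hw4i
      · exact h.trans hw4j
    have hvu : v = u := (pt_eq_iff hij).2 ⟨hvi, hvj⟩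
    have : w3 ∈ ({w1, w2, w4} : Finset (Fin 2 → ZMod q)) :=
      (hprop w3 hw3W).2 (hvu ▸ hadj w3 hw3W)
    simp only [Finset.mem_insert, Finset.mem_singleton] at this
    tauto

lemma nat_key1 : ∀ x y z n : ℕ, x + y = n → n = 4 → x < 2 → y ≤ z → 2 ≤ z := by
  intro x y z n h1 h2 h3 h4; omega

lemma upper {U : Finset (Fin 2 → ZMod q)} :
    ∀ W ⊆ U, Shatters 1 U W → W.card ≤ 3 := by
  intro W hWU hshat
  by_contra hc
  push_neg at hc
  obtain ⟨W', hW'W, hW'4⟩ := Finset.exists_subset_card_eq (by omega : 4 ≤ W.card)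
  have hshat' : Shatters 1 U W' := shatters_mono hW'W hshat
  obtain ⟨u, hu, hprop⟩ := hshat' W' (Finset.Subset.refl _)
  have hadj : ∀ w ∈ W', hammingAdj 1 u w := fun w hw => (hprop w hw).1 hw
  have h01 : ((0 : Fin 2) ≠ 1) := by decide
  have h10 : ((1 : Fin 2) ≠ 0) := by decide
  have hsplit : (W'.filter fun w => w 0 = u 0).card
      + (W'.filter fun w => ¬ (w 0 = u 0)).card = W'.card :=
    Finset.card_filter_add_card_filter_not _
  rcases le_or_gt 2 ((W'.filter fun w => w 0 = u 0).card) with h | h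
  · exact upper_core h01 hshat' hW'4 hadj h
  · have hBsub : (W'.filter fun w => ¬ (w 0 = u 0)) ⊆ (W'.filter fun w => w 1 = u 1) := by
      intro w hw
      rw [Finset.mem_filter] at hw ⊢
      refine ⟨hw.1, ?_⟩
      rcases (adj_iff h01).1 (hadj w hw.1) with ⟨h', _⟩ | ⟨_, h'⟩
      · exact absurd h'.symm hw.2
      · exact h'.symm
    have h2 : 2 ≤ (W'.filter fun w => w 1 = u 1).card := by
      have h3 := Finset.card_le_card hBsub
      exact nat_key1 _ _ _ _ hsplit hW'4 h h3
    exact upper_core h10 hshat' hW'4 hadj h2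


lemma nat_key2 {sb st uc bc tc sc sr bf q : ℕ}
    (e1 : st + sb = uc) (e2 : sb ≤ bf + bc * 2) (e2b : bf ≤ sc)
    (e3 : st + 2 * sr ≤ 3 * tc) (e4 : tc + bc = q) (e5 : 1 ≤ bc)
    (e6 : 3 * q + 1 ≤ uc) : 2 * sr + 2 ≤ sc := by omega

lemma nat_key3 {rc oc uc q : ℕ} (h1 : rc + oc = uc) (h2 : rc ≤ q)
    (h3 : 3 * q + 1 ≤ uc) : 2 * q + 1 ≤ oc := by omega

lemma nat_key4 {dc oc q : ℕ} (h1 : oc ≤ dc * (q - 1)) (h2 : 2 * q + 1 ≤ oc)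
    (h3 : dc ≤ 3) (h4 : 4 ≤ q) : dc = 3 := by
  rcases Nat.lt_or_ge dc 3 with h | h
  · interval_cases dc <;> omega
  · omega

lemma nat_key5 {f1 f2 f3 oc q : ℕ} (h1 : f1 + (f2 + f3) = oc) (h2 : 2 * q + 1 ≤ oc)
    (h4 : 4 ≤ q) : q + 2 ≤ f1 + f2 ∨ q + 2 ≤ f1 + f3 ∨ q + 2 ≤ f2 + f3 := by omega

lemma nat_key6 {ic uc r r' q : ℕ} (h1 : ic + uc = r + r') (h2 : uc ≤ q - 1)
    (h3 : q + 2 ≤ r + r') (h4 : 4 ≤ q) : 3 ≤ ic := by omega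

lemma nat_key7 {s t : ℕ} (h1 : 2 * s + 2 ≤ t) (h2 : 2 * t + 2 ≤ s) : False := by omega

/-- The counting lemma: if every "row" (direction `i`) with ≥ 4 points has at most 2
points whose "column" (direction `j`) contains another point, then
`2·#(single rows) + 2 ≤ #(single columns)`. -/
lemma count [NeZero q] {i j : Fin 2} (hij : i ≠ j) (hq : 4 ≤ q) {U : Finset (Fin 2 → ZMod q)}
    (hU : 3 * q + 1 ≤ U.card)
    (hbad : ∀ a : ZMod q, 4 ≤ (U.filter fun u => u i = a).card →
      ((U.filter fun u => u i = a).filter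
        fun u => 2 ≤ (U.filter fun v => v j = u j).card).card ≤ 2) :
    2 * (Finset.univ.filter fun a : ZMod q =>
        (U.filter fun u => u i = a).card = 1).card + 2 ≤
      (Finset.univ.filter fun y : ZMod q =>
        (U.filter fun v => v j = y).card = 1).card := by
  have hcu : (Finset.univ : Finset (ZMod q)).card = q := by
    rw [Finset.card_univ, ZMod.card]
  have hsum : U.card = ∑ a ∈ (Finset.univ : Finset (ZMod q)),
      (U.filter fun u => u i = a).card :=
    Finset.card_eq_sum_card_fiberwise (fun x _ => Finset.mem_univ (x i))
  set B := (Finset.univ.filter fun a : ZMod q =>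
    4 ≤ (U.filter fun u => u i = a).card) with hBdef
  -- B is nonempty
  have hBne : 1 ≤ B.card := by
    rcases Finset.eq_empty_or_nonempty B with hB | hB
    · exfalso
      have h3 : ∀ a ∈ (Finset.univ : Finset (ZMod q)),
          (U.filter fun u => u i = a).card ≤ 3 := by
        intro a _
        by_contra h4
        have ha : a ∈ B := Finset.mem_filter.2 ⟨Finset.mem_univ a, Nat.lt_of_not_le h4⟩
        rw [hB] at ha
        exact Finset.notMem_empty a ha
      have hUle : U.card ≤ 3 * q := by
        rw [hsum]
        calc ∑ a ∈ (Finset.univ : Finset (ZMod q)), (U.filter fun u => u i = a).card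
            ≤ (Finset.univ : Finset (ZMod q)).card • 3 :=
              Finset.sum_le_card_nsmul _ _ 3 h3
          _ = 3 * q := by rw [hcu, smul_eq_mul, Nat.mul_comm]
      have : 3 * q + 1 ≤ 3 * q := le_trans hU hUle
      exact absurd this (by simp)
    · exact Finset.card_pos.2 hB
  -- the "owned single columns" of each big row
  set F : ZMod q → Finset (Fin 2 → ZMod q) := fun a =>
    (U.filter fun u => u i = a).filter
      (fun u => ¬ 2 ≤ (U.filter fun v => v j = u j).card) with hFdef
  set G : ZMod q → Finset (ZMod q) := fun a => (F a).image (fun u => u j) with hGdef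
  have hrowcoords : ∀ (a : ZMod q) (u v : Fin 2 → ZMod q),
      u ∈ U.filter (fun u => u i = a) → v ∈ U.filter (fun u => u i = a) →
      u j = v j → u = v := by
    intro a u v hu hv huv
    rw [Finset.mem_filter] at hu hv
    exact (pt_eq_iff hij).2 ⟨hu.2.trans hv.2.symm, huv⟩
  have hGcard : ∀ a : ZMod q, (G a).card = (F a).card := by
    intro a
    apply Finset.card_image_of_injOn
    intro u hu v hv huv
    exact hrowcoords a u v (Finset.filter_subset _ _ hu) (Finset.filter_subset _ _ hv) huv
  have hGsub : ∀ a : ZMod q, G a ⊆ (Finset.univ.filter fun y : ZMod q =>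
      (U.filter fun v => v j = y).card = 1) := by
    intro a y hy
    obtain ⟨u, hu, rfl⟩ := Finset.mem_image.1 hy
    rw [hFdef] at hu
    rw [Finset.mem_filter] at hu
    obtain ⟨hurow, hucol⟩ := hu
    rw [Finset.mem_filter] at hurow
    have h1 : 1 ≤ (U.filter fun v => v j = u j).card :=
      Finset.card_pos.2 ⟨u, Finset.mem_filter.2 ⟨hurow.1, rfl⟩⟩
    have h2 : (U.filter fun v => v j = u j).card ≤ 1 := Nat.le_of_not_lt hucol
    exact Finset.mem_filter.2 ⟨Finset.mem_univ _, Nat.le_antisymm h2 h1⟩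
  have hdisj : ∀ a ∈ B, ∀ b ∈ B, a ≠ b → Disjoint (G a) (G b) := by
    intro a _ b _ hab
    rw [Finset.disjoint_left]
    intro y hya hyb
    obtain ⟨u, hu, huj⟩ := Finset.mem_image.1 hya
    obtain ⟨v, hv, hvj⟩ := Finset.mem_image.1 hyb
    rw [hFdef, Finset.mem_filter] at hu hv
    have hcol1 : (U.filter fun w => w j = y).card ≤ 1 := by
      have := hu.2
      rw [huj] at this
      exact Nat.le_of_not_lt this
    have humem : u ∈ U.filter fun w => w j = y :=
      Finset.mem_filter.2 ⟨(Finset.mem_filter.1 hu.1).1, huj⟩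
    have hvmem : v ∈ U.filter fun w => w j = y :=
      Finset.mem_filter.2 ⟨(Finset.mem_filter.1 hv.1).1, hvj⟩
    have huv : u = v := Finset.card_le_one.1 hcol1 u humem v hvmem
    apply hab
    have h1 := (Finset.mem_filter.1 hu.1).2
    have h2 := (Finset.mem_filter.1 hv.1).2
    rw [← h1, ← h2, huv]
  have hsumF : ∑ a ∈ B, (F a).card ≤ (Finset.univ.filter fun y : ZMod q =>
      (U.filter fun v => v j = y).card = 1).card := by
    calc ∑ a ∈ B, (F a).card = ∑ a ∈ B, (G a).card := by
          exact Finset.sum_congr rfl (fun a _ => (hGcard a).symm)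
      _ = (B.biUnion G).card := (Finset.card_biUnion hdisj).symm
      _ ≤ _ := Finset.card_le_card (Finset.biUnion_subset.2 (fun a _ => hGsub a))
  -- row bound on B
  have hrowB : ∀ a ∈ B, (U.filter fun u => u i = a).card ≤ (F a).card + 2 := by
    intro a haB
    have hsplit : ((U.filter fun u => u i = a).filter
        (fun u => 2 ≤ (U.filter fun v => v j = u j).card)).card + (F a).card
        = (U.filter fun u => u i = a).card :=
      Finset.card_filter_add_card_filter_not _
    have hgle := hbad a (Finset.mem_filter.1 haB).2
    rw [← hsplit]
    exact le_trans (Nat.add_le_add_right hgle _) (Nat.le_of_eq (Nat.add_comm _ _))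
  have hsumB : ∑ a ∈ B, (U.filter fun u => u i = a).card
      ≤ (∑ a ∈ B, (F a).card) + B.card * 2 := by
    calc ∑ a ∈ B, (U.filter fun u => u i = a).card
        ≤ ∑ a ∈ B, ((F a).card + 2) := Finset.sum_le_sum hrowB
      _ = (∑ a ∈ B, (F a).card) + B.card * 2 := by
          rw [Finset.sum_add_distrib, Finset.sum_const, smul_eq_mul]
  -- rows outside B
  set T := (Finset.univ : Finset (ZMod q)) \ B with hTdef
  have hsdiff : (∑ a ∈ T, (U.filter fun u => u i = a).card)
      + ∑ a ∈ B, (U.filter fun u => u i = a).card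
      = ∑ a ∈ (Finset.univ : Finset (ZMod q)), (U.filter fun u => u i = a).card :=
    Finset.sum_sdiff (Finset.filter_subset _ _)
  have hTbound : ∑ a ∈ T, ((U.filter fun u => u i = a).card
      + 2 * (if (U.filter fun u => u i = a).card = 1 then 1 else 0)) ≤ 3 * T.card := by
    calc ∑ a ∈ T, ((U.filter fun u => u i = a).card
        + 2 * (if (U.filter fun u => u i = a).card = 1 then 1 else 0))
        ≤ T.card • 3 := by
          apply Finset.sum_le_card_nsmul
          intro a haT
          have hanb : ¬ 4 ≤ (U.filter fun u => u i = a).card := by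
            intro h4
            have haB : a ∈ B := by
              rw [hBdef]
              exact Finset.mem_filter.2 ⟨Finset.mem_univ a, h4⟩
            exact (Finset.mem_sdiff.1 haT).2 haB
          have h3 : (U.filter fun u => u i = a).card ≤ 3 :=
            Nat.lt_succ_iff.mp (Nat.lt_of_not_le hanb)
          by_cases h1 : (U.filter fun u => u i = a).card = 1
          · simp [h1]
          · simp only [h1, if_false, Nat.mul_zero, Nat.add_zero]
            exact h3
      _ = 3 * T.card := by rw [smul_eq_mul, Nat.mul_comm]
  have hTsplit : ∑ a ∈ T, ((U.filter fun u => u i = a).card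
      + 2 * (if (U.filter fun u => u i = a).card = 1 then 1 else 0))
      = (∑ a ∈ T, (U.filter fun u => u i = a).card)
        + 2 * (Finset.univ.filter fun a : ZMod q =>
          (U.filter fun u => u i = a).card = 1).card := by
    rw [Finset.sum_add_distrib, ← Finset.mul_sum]
    congr 1
    congr 1
    rw [← Finset.card_filter]
    congr 1
    apply Finset.ext
    intro a
    simp only [Finset.mem_filter, Finset.mem_sdiff, Finset.mem_univ, true_and, hTdef]
    constructor
    · exact fun h => h.2
    · intro h
      refine ⟨?_, h⟩
      intro haB
      rw [hBdef] at haB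
      have h4 := (Finset.mem_filter.1 haB).2
      rw [h] at h4
      exact absurd h4 (by norm_num)
  have hTcard : T.card + B.card = q := by
    have h := Finset.card_sdiff_add_card_eq_card (Finset.subset_univ B)
    rw [hcu] at h
    exact h
  rw [hTsplit] at hTbound
  exact nat_key2 (hsdiff.trans hsum.symm) hsumB hsumF hTbound hTcard hBne hU

lemma nat_key4' {dc oc q : ℕ} (h1 : oc ≤ dc * (q - 1)) (h2 : 2 * q + 1 ≤ oc)
    (h3 : dc ≤ 3) (h4 : 4 ≤ q) : dc = 3 := by
  have : dc = 0 ∨ dc = 1 ∨ dc = 2 ∨ dc = 3 := by omega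
  rcases this with rfl | rfl | rfl | rfl <;> omega

/-- From two columns (direction `j`) whose off-row point counts total at least `q+2`,
together with a row-`a` point in each, build a shattered GRID triple. -/
lemma gridfind {i j : Fin 2} (hij : i ≠ j) [NeZero q] (hq : 4 ≤ q)
    {U : Finset (Fin 2 → ZMod q)} {a p p' : ZMod q} (hpp : p ≠ p')
    (hfpair : q + 2 ≤ ((U.filter fun v => ¬ v i = a).filter fun v => v j = p).card
      + ((U.filter fun v => ¬ v i = a).filter fun v => v j = p').card)
    (hwp : ∃ w, w ∈ U ∧ w i = a ∧ w j = p)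
    (hwp' : ∃ w, w ∈ U ∧ w i = a ∧ w j = p') :
    ∃ W ⊆ U, W.card = 3 ∧ Shatters 1 U W := by
  have hcu : (Finset.univ : Finset (ZMod q)).card = q := by
    rw [Finset.card_univ, ZMod.card]
  have hinj : ∀ c : ZMod q, Set.InjOn (fun v : Fin 2 → ZMod q => v i)
      ↑((U.filter fun v => ¬ v i = a).filter fun v => v j = c) := by
    intro c u hu v hv huv
    rw [Finset.mem_coe, Finset.mem_filter] at hu hv
    exact (pt_eq_iff hij).2 ⟨huv, hu.2.trans hv.2.symm⟩
  have hcardim : ∀ c : ZMod q,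
      (((U.filter fun v => ¬ v i = a).filter fun v => v j = c).image fun v => v i).card
      = ((U.filter fun v => ¬ v i = a).filter fun v => v j = c).card := by
    intro c
    exact Finset.card_image_of_injOn (hinj c)
  have hsubR : ∀ c : ZMod q,
      (((U.filter fun v => ¬ v i = a).filter fun v => v j = c).image fun v => v i)
      ⊆ Finset.univ.erase a := by
    intro c x hx
    obtain ⟨v, hv, rfl⟩ := Finset.mem_image.1 hx
    rw [Finset.mem_filter] at hv
    have hvO := Finset.mem_filter.1 hv.1
    exact Finset.mem_erase.2 ⟨hvO.2, Finset.mem_univ _⟩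
  set R := ((U.filter fun v => ¬ v i = a).filter fun v => v j = p).image
    (fun v => v i) with hRdef
  set R' := ((U.filter fun v => ¬ v i = a).filter fun v => v j = p').image
    (fun v => v i) with hR'def
  have hu1 : (R ∪ R').card ≤ q - 1 := by
    have h := Finset.card_le_card (Finset.union_subset (hsubR p) (hsubR p'))
    rw [Finset.card_erase_of_mem (Finset.mem_univ a), hcu] at h
    exact h
  have hiu : (R ∩ R').card + (R ∪ R').card = R.card + R'.card :=
    Finset.card_inter_add_card_union R R'
  have hRcards : q + 2 ≤ R.card + R'.card := by
    rw [hRdef, hR'def, hcardim p, hcardim p']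
    exact hfpair
  have hint : 3 ≤ (R ∩ R').card := nat_key6 hiu hu1 hRcards hq
  obtain ⟨T, hTsub, hT3⟩ := Finset.exists_subset_card_eq hint
  obtain ⟨x1, x2, x3, hx12, hx13, hx23, hTeq⟩ := Finset.card_eq_three.1 hT3
  rw [hTeq] at hTsub
  have hx1m := hTsub (show x1 ∈ ({x1, x2, x3} : Finset (ZMod q)) by simp)
  have hx2m := hTsub (show x2 ∈ ({x1, x2, x3} : Finset (ZMod q)) by simp)
  have hx3m := hTsub (show x3 ∈ ({x1, x2, x3} : Finset (ZMod q)) by simp)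
  have hgetg : ∀ x ∈ R ∩ R', (x ≠ a) ∧ (∃ g, g ∈ U ∧ g i = x ∧ g j = p)
      ∧ (∃ k, k ∈ U ∧ k i = x ∧ k j = p') := by
    intro x hx
    have hxR := (Finset.mem_inter.1 hx).1
    have hxR' := (Finset.mem_inter.1 hx).2
    have hxa : x ≠ a := (Finset.mem_erase.1 (hsubR p hxR)).1
    obtain ⟨g, hg, hgi⟩ := Finset.mem_image.1 hxR
    obtain ⟨k, hk, hki⟩ := Finset.mem_image.1 hxR'
    rw [Finset.mem_filter] at hg hk
    exact ⟨hxa, ⟨g, (Finset.mem_filter.1 hg.1).1, hgi, hg.2⟩,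
      ⟨k, (Finset.mem_filter.1 hk.1).1, hki, hk.2⟩⟩
  obtain ⟨hx1a, ⟨g1, hg1U, hg1i, hg1j⟩, ⟨k1, hk1U, hk1i, hk1j⟩⟩ := hgetg x1 hx1m
  obtain ⟨hx2a, ⟨g2, hg2U, hg2i, hg2j⟩, ⟨k2, hk2U, hk2i, hk2j⟩⟩ := hgetg x2 hx2m
  obtain ⟨hx3a, ⟨g3, hg3U, hg3i, hg3j⟩, ⟨k3, hk3U, hk3i, hk3j⟩⟩ := hgetg x3 hx3m
  obtain ⟨g4, hg4U, hg4i, hg4j⟩ := hwp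
  obtain ⟨k4, hk4U, hk4i, hk4j⟩ := hwp'
  exact grid hij hpp hx12 hx13 hx1a hx23 hx2a hx3a
    hg1U hg2U hg3U hg4U hk1U hk2U hk3U hk4U
    hg1i hg1j hg2i hg2j hg3i hg3j hg4i hg4j
    hk1i hk1j hk2i hk2j hk3i hk3j hk4i hk4j

/-- A "good big row": a row `a` (direction `i`) with at least 4 points, at least 3 of
which lie in a column (direction `j`) with at least 2 points of `U`. This yields a
shattered triple. -/
lemma constr {i j : Fin 2} (hij : i ≠ j) (hq : 4 ≤ q) {U : Finset (Fin 2 → ZMod q)}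
    (hU : 3 * q + 1 ≤ U.card) {a : ZMod q}
    (hbig : 4 ≤ (U.filter fun u => u i = a).card)
    (hgood : 3 ≤ ((U.filter fun u => u i = a).filter
      fun u => 2 ≤ (U.filter fun v => v j = u j).card).card) :
    ∃ W ⊆ U, W.card = 3 ∧ Shatters 1 U W := by
  haveI : NeZero q := ⟨by rintro rfl; exact absurd hq (by norm_num)⟩
  have hcu : (Finset.univ : Finset (ZMod q)).card = q := by
    rw [Finset.card_univ, ZMod.card]
  obtain ⟨T, hTsub, hT3⟩ := Finset.exists_subset_card_eq hgood
  obtain ⟨u1, u2, u3, h12, h13, h23, hTeq⟩ := Finset.card_eq_three.1 hT3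
  rw [hTeq] at hTsub
  have hmemG : ∀ u ∈ ({u1, u2, u3} : Finset (Fin 2 → ZMod q)),
      u ∈ U ∧ u i = a ∧ 2 ≤ (U.filter fun v => v j = u j).card := by
    intro u hu
    have h := hTsub hu
    rw [Finset.mem_filter] at h
    obtain ⟨hrow, hc⟩ := h
    rw [Finset.mem_filter] at hrow
    exact ⟨hrow.1, hrow.2, hc⟩
  obtain ⟨hu1U, hu1i, hu1c⟩ := hmemG u1 (by simp)
  obtain ⟨hu2U, hu2i, hu2c⟩ := hmemG u2 (by simp)
  obtain ⟨hu3U, hu3i, hu3c⟩ := hmemG u3 (by simp)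
  have hj12 : u1 j ≠ u2 j := fun h => h12 ((pt_eq_iff hij).2 ⟨hu1i.trans hu2i.symm, h⟩)
  have hj13 : u1 j ≠ u3 j := fun h => h13 ((pt_eq_iff hij).2 ⟨hu1i.trans hu3i.symm, h⟩)
  have hj23 : u2 j ≠ u3 j := fun h => h23 ((pt_eq_iff hij).2 ⟨hu2i.trans hu3i.symm, h⟩)
  -- off-row partners in the three columns
  obtain ⟨v1, hv1mem, hv1ne⟩ :=
    Finset.exists_mem_ne (lt_of_lt_of_le one_lt_two hu1c) u1
  rw [Finset.mem_filter] at hv1mem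
  obtain ⟨hv1U, hv1j⟩ := hv1mem
  have hv1i : ¬ v1 i = a := fun h => hv1ne ((pt_eq_iff hij).2 ⟨h.trans hu1i.symm, hv1j⟩)
  obtain ⟨v2, hv2mem, hv2ne⟩ :=
    Finset.exists_mem_ne (lt_of_lt_of_le one_lt_two hu2c) u2
  rw [Finset.mem_filter] at hv2mem
  obtain ⟨hv2U, hv2j⟩ := hv2mem
  have hv2i : ¬ v2 i = a := fun h => hv2ne ((pt_eq_iff hij).2 ⟨h.trans hu2i.symm, hv2j⟩)
  obtain ⟨v3, hv3mem, hv3ne⟩ :=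
    Finset.exists_mem_ne (lt_of_lt_of_le one_lt_two hu3c) u3
  rw [Finset.mem_filter] at hv3mem
  obtain ⟨hv3U, hv3j⟩ := hv3mem
  have hv3i : ¬ v3 i = a := fun h => hv3ne ((pt_eq_iff hij).2 ⟨h.trans hu3i.symm, hv3j⟩)
  -- a fourth point in the row
  have htriple : ({u1, u2, u3} : Finset (Fin 2 → ZMod q)).card ≤ 3 := by
    apply le_trans (Finset.card_insert_le _ _)
    apply Nat.succ_le_succ
    apply le_trans (Finset.card_insert_le _ _)
    simp
  have hnsub : ¬ (U.filter fun u => u i = a) ⊆ {u1, u2, u3} := by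
    intro hc
    exact absurd (le_trans hbig (le_trans (Finset.card_le_card hc) htriple)) (by norm_num)
  obtain ⟨wt, hwtrow, hwtn⟩ := Finset.not_subset.1 hnsub
  rw [Finset.mem_filter] at hwtrow
  obtain ⟨hwtU, hwti⟩ := hwtrow
  simp only [Finset.mem_insert, Finset.mem_singleton, not_or] at hwtn
  obtain ⟨hwt1, hwt2, hwt3⟩ := hwtn
  have hwj1 : wt j ≠ u1 j := fun h => hwt1 ((pt_eq_iff hij).2 ⟨hwti.trans hu1i.symm, h⟩)
  have hwj2 : wt j ≠ u2 j := fun h => hwt2 ((pt_eq_iff hij).2 ⟨hwti.trans hu2i.symm, h⟩)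
  have hwj3 : wt j ≠ u3 j := fun h => hwt3 ((pt_eq_iff hij).2 ⟨hwti.trans hu3i.symm, h⟩)
  -- the off-row columns
  have hv1O : v1 ∈ U.filter fun v => ¬ v i = a := Finset.mem_filter.2 ⟨hv1U, hv1i⟩
  have hv2O : v2 ∈ U.filter fun v => ¬ v i = a := Finset.mem_filter.2 ⟨hv2U, hv2i⟩
  have hv3O : v3 ∈ U.filter fun v => ¬ v i = a := Finset.mem_filter.2 ⟨hv3U, hv3i⟩
  have hD1 : u1 j ∈ (U.filter fun v => ¬ v i = a).image (fun v => v j) :=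
    Finset.mem_image.2 ⟨v1, hv1O, hv1j⟩
  have hD2 : u2 j ∈ (U.filter fun v => ¬ v i = a).image (fun v => v j) :=
    Finset.mem_image.2 ⟨v2, hv2O, hv2j⟩
  have hD3 : u3 j ∈ (U.filter fun v => ¬ v i = a).image (fun v => v j) :=
    Finset.mem_image.2 ⟨v3, hv3O, hv3j⟩
  by_cases hD : 4 ≤ ((U.filter fun v => ¬ v i = a).image (fun v => v j)).card
  · -- STAR case
    have htrip2 : ({u1 j, u2 j, u3 j} : Finset (ZMod q)).card ≤ 3 := by
      apply le_trans (Finset.card_insert_le _ _)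
      apply Nat.succ_le_succ
      apply le_trans (Finset.card_insert_le _ _)
      simp
    have hnsub2 : ¬ ((U.filter fun v => ¬ v i = a).image (fun v => v j))
        ⊆ {u1 j, u2 j, u3 j} := by
      intro hc
      exact absurd (le_trans hD (le_trans (Finset.card_le_card hc) htrip2)) (by norm_num)
    obtain ⟨d, hdD, hdn⟩ := Finset.not_subset.1 hnsub2
    obtain ⟨v0, hv0O, hv0j⟩ := Finset.mem_image.1 hdD
    rw [Finset.mem_filter] at hv0O
    simp only [Finset.mem_insert, Finset.mem_singleton, not_or] at hdn
    exact star hij hu1U hu2U hu3U hwtU hv1U hv2U hv3U hv0O.1 hu1i hu2i hu3i hwti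
      hj12 hj13 hj23 hwj1 hwj2 hwj3 hv1i hv1j hv2i hv2j hv3i hv3j hv0O.2
      (by rw [hv0j]; exact hdn.1) (by rw [hv0j]; exact hdn.2.1) (by rw [hv0j]; exact hdn.2.2)
  · -- GRID case
    have hD3le : ((U.filter fun v => ¬ v i = a).image (fun v => v j)).card ≤ 3 :=
      Nat.lt_succ_iff.mp (Nat.lt_of_not_le hD)
    have hrowle : (U.filter fun u => u i = a).card ≤ q := by
      have h : (U.filter fun u => u i = a).card ≤ (Finset.univ : Finset (ZMod q)).card := by
        apply Finset.card_le_card_of_injOn (fun u => u j) (fun _ _ => Finset.mem_univ _)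
        intro u hu v hv huv
        rw [Finset.mem_coe, Finset.mem_filter] at hu hv
        exact (pt_eq_iff hij).2 ⟨hu.2.trans hv.2.symm, huv⟩
      rw [hcu] at h
      exact h
    have hOsplit : (U.filter fun u => u i = a).card
        + (U.filter fun u => ¬ u i = a).card = U.card :=
      Finset.card_filter_add_card_filter_not _
    have hOcard : 2 * q + 1 ≤ (U.filter fun u => ¬ u i = a).card :=
      nat_key3 hOsplit hrowle hU
    have hfib : ∑ y ∈ ((U.filter fun v => ¬ v i = a).image (fun v => v j)),
        ((U.filter fun v => ¬ v i = a).filter fun v => v j = y).card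
        = (U.filter fun v => ¬ v i = a).card :=
      (Finset.card_eq_sum_card_fiberwise (fun x hx => Finset.mem_image_of_mem _ hx)).symm
    have hfle : ∀ y ∈ ((U.filter fun v => ¬ v i = a).image (fun v => v j)),
        ((U.filter fun v => ¬ v i = a).filter fun v => v j = y).card ≤ q - 1 := by
      intro y _
      have hsub : (((U.filter fun v => ¬ v i = a).filter fun v => v j = y).image
          fun v => v i) ⊆ Finset.univ.erase a := by
        intro x hx
        obtain ⟨v, hv, rfl⟩ := Finset.mem_image.1 hx
        rw [Finset.mem_filter] at hv
        exact Finset.mem_erase.2 ⟨(Finset.mem_filter.1 hv.1).2, Finset.mem_univ _⟩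
      have hinj : (((U.filter fun v => ¬ v i = a).filter fun v => v j = y).image
          fun v => v i).card = ((U.filter fun v => ¬ v i = a).filter fun v => v j = y).card := by
        apply Finset.card_image_of_injOn
        intro u hu v hv huv
        rw [Finset.mem_coe, Finset.mem_filter] at hu hv
        exact (pt_eq_iff hij).2 ⟨huv, hu.2.trans hv.2.symm⟩
      have h := Finset.card_le_card hsub
      rw [hinj, Finset.card_erase_of_mem (Finset.mem_univ a), hcu] at h
      exact h
    have hsumle : (U.filter fun v => ¬ v i = a).card
        ≤ ((U.filter fun v => ¬ v i = a).image (fun v => v j)).card * (q - 1) := by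
      rw [← hfib]
      calc ∑ y ∈ ((U.filter fun v => ¬ v i = a).image (fun v => v j)),
          ((U.filter fun v => ¬ v i = a).filter fun v => v j = y).card
          ≤ ((U.filter fun v => ¬ v i = a).image (fun v => v j)).card • (q - 1) :=
            Finset.sum_le_card_nsmul _ _ _ hfle
        _ = _ := by rw [smul_eq_mul]
    have hDcard : ((U.filter fun v => ¬ v i = a).image (fun v => v j)).card = 3 :=
      nat_key4' hsumle hOcard hD3le hq
    -- the three column values are exactly the triple of row-columns
    have htrip3 : ({u1 j, u2 j, u3 j} : Finset (ZMod q)).card = 3 := by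
      rw [Finset.card_insert_of_notMem (by simp [hj12, hj13]),
        Finset.card_insert_of_notMem (by simp [hj23]), Finset.card_singleton]
    have hsub3 : ({u1 j, u2 j, u3 j} : Finset (ZMod q))
        ⊆ (U.filter fun v => ¬ v i = a).image (fun v => v j) := by
      intro y hy
      simp only [Finset.mem_insert, Finset.mem_singleton] at hy
      rcases hy with rfl | rfl | rfl
      · exact hD1
      · exact hD2
      · exact hD3
    have hteq : ({u1 j, u2 j, u3 j} : Finset (ZMod q))
        = (U.filter fun v => ¬ v i = a).image (fun v => v j) :=
      Finset.eq_of_subset_of_card_le hsub3 (by rw [hDcard, htrip3])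
    have hrowpts : ∀ y ∈ (U.filter fun v => ¬ v i = a).image (fun v => v j),
        ∃ w, w ∈ U ∧ w i = a ∧ w j = y := by
      intro y hy
      rw [← hteq] at hy
      simp only [Finset.mem_insert, Finset.mem_singleton] at hy
      rcases hy with rfl | rfl | rfl
      · exact ⟨u1, hu1U, hu1i, rfl⟩
      · exact ⟨u2, hu2U, hu2i, rfl⟩
      · exact ⟨u3, hu3U, hu3i, rfl⟩
    obtain ⟨p1, p2, p3, hp12, hp13, hp23, hDeq⟩ := Finset.card_eq_three.1 hDcard
    have hp1D : p1 ∈ (U.filter fun v => ¬ v i = a).image (fun v => v j) := by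
      rw [hDeq]; simp
    have hp2D : p2 ∈ (U.filter fun v => ¬ v i = a).image (fun v => v j) := by
      rw [hDeq]; simp
    have hp3D : p3 ∈ (U.filter fun v => ¬ v i = a).image (fun v => v j) := by
      rw [hDeq]; simp
    rw [hDeq, Finset.sum_insert (by simp [hp12, hp13]),
      Finset.sum_insert (by simp [hp23]), Finset.sum_singleton] at hfib
    rcases nat_key5 hfib hOcard hq with h | h | h
    · exact gridfind hij hq hp12 h (hrowpts p1 hp1D) (hrowpts p2 hp2D)
    · exact gridfind hij hq hp13 h (hrowpts p1 hp1D) (hrowpts p3 hp3D)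
    · exact gridfind hij hq hp23 h (hrowpts p2 hp2D) (hrowpts p3 hp3D)

end VCaux

/-- if `q ≥ 4` and `U ⊆ V(H(2,q))` has `|U| ≥ 3q+1`,
then the VC-dimension of `(U, n(U))` is exactly 3. -/
theorem vc_dim_eq_three_of_card (q : ℕ) (hq : 4 ≤ q)
    (U : Finset (Fin 2 → ZMod q)) (hU : 3 * q + 1 ≤ U.card) :
    (∃ W ⊆ U, W.card = 3 ∧ Shatters 1 U W) ∧
    (∀ W ⊆ U, Shatters 1 U W → W.card ≤ 3) := by
  constructor
  · by_cases H : ∃ (i j : Fin 2) (a : ZMod q), i ≠ j ∧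
        4 ≤ (U.filter fun u => u i = a).card ∧
        3 ≤ ((U.filter fun u => u i = a).filter
          fun u => 2 ≤ (U.filter fun v => v j = u j).card).card
    · obtain ⟨i, j, a, hij, hbig, hgood⟩ := H
      exact VCaux.constr hij hq hU hbig hgood
    · exfalso
      push_neg at H
      haveI : NeZero q := ⟨by rintro rfl; exact absurd hq (by norm_num)⟩
      have h01 := VCaux.count (show (0 : Fin 2) ≠ 1 by decide) hq hU
        (fun a h4 => Nat.lt_succ_iff.mp (H 0 1 a (by decide) h4))
      have h10 := VCaux.count (show (1 : Fin 2) ≠ 0 by decide) hq hU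
        (fun a h4 => Nat.lt_succ_iff.mp (H 1 0 a (by decide) h4))
      exact VCaux.nat_key7 h01 h10
  · exact VCaux.upper
end

section
/- For every even natural number q ≥ 4 there exists a subset U of the vertices of the Hamming graph H(3,q) with |U| = 5q²/4 such that the VC-dimension of (U, n(U)) is exactly 1. -/
lemma adj_iff_s6 {q : ℕ} (x y : Fin 3 → ZMod q) :
    hammingAdj 1 x y ↔ ((x 0 ≠ y 0 ∧ x 1 = y 1 ∧ x 2 = y 2) ∨
      (x 0 = y 0 ∧ x 1 ≠ y 1 ∧ x 2 = y 2) ∨ (x 0 = y 0 ∧ x 1 = y 1 ∧ x 2 ≠ y 2)) := by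
  unfold hammingAdj
  rw [show (Finset.univ : Finset (Fin 3)) = {0, 1, 2} from rfl]
  by_cases h0 : x 0 = y 0 <;> by_cases h1 : x 1 = y 1 <;> by_cases h2 : x 2 = y 2 <;>
    simp [Finset.filter_insert, Finset.filter_singleton, h0, h1, h2]

lemma adj_symm {q : ℕ} {x y : Fin 3 → ZMod q} (h : hammingAdj 1 x y) :
    hammingAdj 1 y x := by
  rw [adj_iff_s6] at h ⊢; tauto

section Aux

variable {q m : ℕ} [NeZero q] (hqm : q = 2 * m) (hm : 2 ≤ m)
include hqm hm

/-- key numeric fact: two values with val < m can't differ by m -/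
lemma aux_ne_add (s t : ZMod q) (hs : s.val < m) (ht : t.val < m) :
    s ≠ t + (m : ZMod q) := by
  intro h
  have hmq : m < q := by omega
  have hmv : ((m : ZMod q)).val = m := ZMod.val_cast_of_lt hmq
  have : (t + (m : ZMod q)).val = t.val + m := by
    rw [ZMod.val_add_of_lt]; · rw [hmv]
    · rw [hmv]; omega
  rw [h] at hs; omega

lemma aux_m_ne_zero : (m : ZMod q) ≠ 0 := by
  intro h
  have hmq : m < q := by omega
  have := ZMod.val_cast_of_lt (n := q) hmq
  rw [h, ZMod.val_zero] at this; omega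

/-- the plane predicate -/
def IsPlane {q : ℕ} (v : Fin 3 → ZMod q) : Prop := v 2 = v 0 + v 1

/-- the extra points -/
def IsX (m : ℕ) {q : ℕ} (v : Fin 3 → ZMod q) : Prop :=
  v 2 = v 0 + v 1 + (m : ZMod q) ∧ (v 0).val < m ∧ (v 1).val < m

omit hm in
lemma plane_indep {x y : Fin 3 → ZMod q} (hx : IsPlane x) (hy : IsPlane y)
    (h : hammingAdj 1 x y) : False := by
  rw [adj_iff_s6] at h
  unfold IsPlane at hx hy
  rcases h with ⟨h0, h1, h2⟩ | ⟨h0, h1, h2⟩ | ⟨h0, h1, h2⟩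
  · rw [hx, hy, h1] at h2; exact h0 (by linear_combination h2)
  · rw [hx, hy, h0] at h2; exact h1 (by linear_combination h2)
  · rw [hx, hy, h0, h1] at h2; exact h2 rfl

omit hm in
lemma x_indep {x y : Fin 3 → ZMod q} (hx : IsX m x) (hy : IsX m y)
    (h : hammingAdj 1 x y) : False := by
  rw [adj_iff_s6] at h
  obtain ⟨hx, -, -⟩ := hx
  obtain ⟨hy, -, -⟩ := hy
  rcases h with ⟨h0, h1, h2⟩ | ⟨h0, h1, h2⟩ | ⟨h0, h1, h2⟩
  · rw [hx, hy, h1] at h2; exact h0 (by linear_combination h2)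
  · rw [hx, hy, h0] at h2; exact h1 (by linear_combination h2)
  · rw [hx, hy, h0, h1] at h2; exact h2 rfl

/-- an X-point is adjacent to a plane point only in one of three ways -/
lemma x_plane_adj {x p : Fin 3 → ZMod q} (hx : IsX m x) (hp : IsPlane p)
    (h : hammingAdj 1 x p) :
    (p 0 = x 0 ∧ p 1 = x 1) ∨ (p 0 = x 0 + (m : ZMod q) ∧ p 1 = x 1) ∨
      (p 0 = x 0 ∧ p 1 = x 1 + (m : ZMod q)) := by
  rw [adj_iff_s6] at h
  obtain ⟨hx2, -, -⟩ := hx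
  unfold IsPlane at hp
  rcases h with ⟨h0, h1, h2⟩ | ⟨h0, h1, h2⟩ | ⟨h0, h1, h2⟩
  · right; left
    constructor
    · rw [hx2, hp, ← h1] at h2; linear_combination -h2
    · exact h1.symm
  · right; right
    constructor
    · exact h0.symm
    · rw [hx2, hp, ← h0] at h2; linear_combination -h2
  · exact Or.inl ⟨h0.symm, h1.symm⟩

/-- claim uniqueness: distinct X points are never adjacent to a common plane point -/
lemma claim_unique {x y p : Fin 3 → ZMod q} (hx : IsX m x) (hy : IsX m y)
    (hp : IsPlane p) (hxp : hammingAdj 1 x p) (hyp : hammingAdj 1 y p) : x = y := by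
  obtain ⟨hx2, hx0, hx1⟩ := hx
  obtain ⟨hy2, hy0, hy1⟩ := hy
  have h01 : x 0 = y 0 ∧ x 1 = y 1 := by
    rcases x_plane_adj hqm hm ⟨hx2, hx0, hx1⟩ hp hxp with ⟨a, b⟩ | ⟨a, b⟩ | ⟨a, b⟩ <;>
      rcases x_plane_adj hqm hm ⟨hy2, hy0, hy1⟩ hp hyp with ⟨c, d⟩ | ⟨c, d⟩ | ⟨c, d⟩
    · exact ⟨a.symm.trans c, b.symm.trans d⟩
    · exact absurd (a.symm.trans c) (aux_ne_add hqm hm _ _ hx0 hy0)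
    · exact absurd (b.symm.trans d) (aux_ne_add hqm hm _ _ hx1 hy1)
    · exact absurd (c.symm.trans a) (aux_ne_add hqm hm _ _ hy0 hx0)
    · refine ⟨?_, b.symm.trans d⟩
      have := a.symm.trans c
      linear_combination this
    · exact absurd (c.symm.trans a) (aux_ne_add hqm hm _ _ hy0 hx0)
    · exact absurd (d.symm.trans b) (aux_ne_add hqm hm _ _ hy1 hx1)
    · exact absurd (d.symm.trans b) (aux_ne_add hqm hm _ _ hy1 hx1)
    · refine ⟨a.symm.trans c, ?_⟩
      have := b.symm.trans d
      linear_combination this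
  obtain ⟨e0, e1⟩ := h01
  funext i
  fin_cases i
  · exact e0
  · exact e1
  · show x 2 = y 2
    rw [hx2, hy2, e0, e1]

end Aux

/-- for every even `q ≥ 4` there is `U ⊆ V(H(3,q))` with `|U| = 5q²/4`
whose VC-dimension is exactly 1. -/
theorem exists_vc_dim_one_H3q (q : ℕ) (hq : 4 ≤ q) (heven : Even q) :
    ∃ U : Finset (Fin 3 → ZMod q),
      4 * U.card = 5 * q ^ 2 ∧
      (∃ W ⊆ U, W.card = 1 ∧ Shatters 1 U W) ∧
      (∀ W ⊆ U, Shatters 1 U W → W.card ≤ 1) := by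
  haveI : NeZero q := ⟨by omega⟩
  obtain ⟨m, hm'⟩ := heven
  have hqm : q = 2 * m := by omega
  have hm : 2 ≤ m := by omega
  classical
  set U : Finset (Fin 3 → ZMod q) :=
    Finset.univ.filter (fun v => IsPlane v ∨ IsX m v) with hU
  have memU : ∀ v : Fin 3 → ZMod q, v ∈ U ↔ (IsPlane v ∨ IsX m v) := by
    intro v; simp [hU]
  -- a point cannot be both plane and X
  have not_both : ∀ v : Fin 3 → ZMod q, IsPlane v → IsX m v → False := by
    intro v h1 h2
    obtain ⟨h2, -, -⟩ := h2
    unfold IsPlane at h1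
    apply aux_m_ne_zero hqm hm
    linear_combination h1 - h2
  refine ⟨U, ?_, ?_, ?_⟩
  · -- cardinality
    have hsplit : U = Finset.univ.filter (fun v => IsPlane v) ∪
        Finset.univ.filter (fun v => IsX m v) := by
      rw [hU, Finset.filter_or]
    have hdisj : Disjoint (Finset.univ.filter (fun v : Fin 3 → ZMod q => IsPlane v))
        (Finset.univ.filter (fun v => IsX m v)) := by
      rw [Finset.disjoint_left]
      intro v hv1 hv2
      simp only [Finset.mem_filter] at hv1 hv2
      exact not_both v hv1.2 hv2.2
    have hcard1 : (Finset.univ.filter (fun v : Fin 3 → ZMod q => IsPlane v)).card = q * q := by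
      have : (Finset.univ.filter (fun v : Fin 3 → ZMod q => IsPlane v)).card =
          (Finset.univ : Finset (ZMod q × ZMod q)).card := by
        refine Finset.card_bij' (fun v _ => (v 0, v 1))
          (fun p _ => ![p.1, p.2, p.1 + p.2]) ?_ ?_ ?_ ?_
        · intro a ha; exact Finset.mem_univ _
        · intro p hp
          simp only [Finset.mem_filter, Finset.mem_univ, true_and]
          unfold IsPlane; simp
        · intro a ha
          simp only [Finset.mem_filter, Finset.mem_univ, true_and] at ha
          unfold IsPlane at ha
          funext i; fin_cases i <;> simp [ha]
        · intro p hp; simp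
      rw [this]
      simp [ZMod.card]
    have hcard2 : (Finset.univ.filter (fun v : Fin 3 → ZMod q => IsX m v)).card = m * m := by
      have : (Finset.univ.filter (fun v : Fin 3 → ZMod q => IsX m v)).card =
          (Finset.range m ×ˢ Finset.range m).card := by
        refine Finset.card_bij' (fun v _ => ((v 0).val, (v 1).val))
          (fun p _ => ![(p.1 : ZMod q), (p.2 : ZMod q), (p.1 : ZMod q) + (p.2 : ZMod q) + (m : ZMod q)]) ?_ ?_ ?_ ?_
        · intro a ha
          simp only [Finset.mem_filter, Finset.mem_univ, true_and] at ha
          obtain ⟨-, h0, h1⟩ := ha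
          simp [Finset.mem_product, h0, h1]
        · intro p hp
          simp only [Finset.mem_product, Finset.mem_range] at hp
          simp only [Finset.mem_filter, Finset.mem_univ, true_and]
          refine ⟨?_, ?_, ?_⟩
          · show _ = _; simp
          · show ((↑p.1 : ZMod q)).val < m
            rw [ZMod.val_cast_of_lt (by omega)]; exact hp.1
          · show ((↑p.2 : ZMod q)).val < m
            rw [ZMod.val_cast_of_lt (by omega)]; exact hp.2
        · intro a ha
          simp only [Finset.mem_filter, Finset.mem_univ, true_and] at ha
          obtain ⟨h2, -, -⟩ := ha
          funext i; fin_cases i <;> simp [ZMod.natCast_val, ZMod.cast_id', id, h2]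
        · intro p hp
          simp only [Finset.mem_product, Finset.mem_range] at hp
          have e1 : ((↑p.1 : ZMod q)).val = p.1 := ZMod.val_cast_of_lt (by omega)
          have e2 : ((↑p.2 : ZMod q)).val = p.2 := ZMod.val_cast_of_lt (by omega)
          simp [e1, e2]
      rw [this, Finset.card_product, Finset.card_range]
    rw [hsplit, Finset.card_union_of_disjoint hdisj, hcard1, hcard2]
    nlinarith [hqm]
  · -- VC dimension ≥ 1
    refine ⟨{![0, 0, 0]}, ?_, Finset.card_singleton _, ?_⟩
    · simp only [Finset.singleton_subset_iff, memU]
      left; unfold IsPlane; simp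
    · intro S hS
      rcases Finset.subset_singleton_iff.mp hS with rfl | rfl
      · refine ⟨![0, 0, 0], ?_, ?_⟩
        · rw [memU]; left; unfold IsPlane; simp
        · intro w hw
          rw [Finset.mem_singleton] at hw
          subst hw
          simp only [Finset.notMem_empty, false_iff]
          rw [adj_iff_s6]; simp
      · refine ⟨![0, 0, (m : ZMod q)], ?_, ?_⟩
        · rw [memU]; right
          refine ⟨by simp [IsX], ?_, ?_⟩
          · show ((0 : ZMod q)).val < m; simp [ZMod.val_zero]; omega
          · show ((0 : ZMod q)).val < m; simp [ZMod.val_zero]; omega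
        · intro w hw
          rw [Finset.mem_singleton] at hw
          subst hw
          simp only [Finset.mem_singleton, true_iff]
          rw [adj_iff_s6]
          right; right
          refine ⟨by simp, by simp, ?_⟩
          simp only [Matrix.cons_val_two, Matrix.tail_cons, Matrix.head_cons,
            Matrix.cons_val_zero]
          exact aux_m_ne_zero hqm hm
  · -- VC dimension ≤ 1
    intro W hW hshat
    by_contra hcard
    push_neg at hcard
    obtain ⟨w1, hw1, w2, hw2, hne⟩ := Finset.one_lt_card.mp hcard
    -- get common neighbor u
    obtain ⟨u, hu, hu'⟩ := hshat {w1, w2} (by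
      intro x hx
      rcases Finset.mem_insert.mp hx with rfl | hx
      · exact hw1
      · rw [Finset.mem_singleton] at hx; subst hx; exact hw2)
    have adj1 : hammingAdj 1 u w1 := (hu' w1 hw1).mp (Finset.mem_insert_self _ _)
    have adj2 : hammingAdj 1 u w2 := (hu' w2 hw2).mp (by simp)
    -- u must be an X point, w1 w2 plane points
    have hux : IsX m u := by
      rcases (memU u).mp hu with hup | hux
      · exfalso
        have hx1 : IsX m w1 := by
          rcases (memU w1).mp (hW hw1) with h | h
          · exact absurd adj1 (fun h' => plane_indep hqm hup h h')
          · exact h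
        have hx2 : IsX m w2 := by
          rcases (memU w2).mp (hW hw2) with h | h
          · exact absurd adj2 (fun h' => plane_indep hqm hup h h')
          · exact h
        exact hne (claim_unique hqm hm hx1 hx2 hup (adj_symm adj1) (adj_symm adj2))
      · exact hux
    have hp1 : IsPlane w1 := by
      rcases (memU w1).mp (hW hw1) with h | h
      · exact h
      · exact absurd adj1 (fun h' => x_indep hqm hux h h')
    -- get a vertex adjacent to w1 but not w2
    obtain ⟨u', hu'mem, hu''⟩ := hshat {w1} (Finset.singleton_subset_iff.mpr hw1)
    have adj1' : hammingAdj 1 u' w1 := (hu'' w1 hw1).mp (Finset.mem_singleton_self _)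
    have nadj2' : ¬ hammingAdj 1 u' w2 := by
      intro h
      exact hne ((Finset.mem_singleton.mp ((hu'' w2 hw2).mpr h))).symm
    -- u' is an X point adjacent to plane w1, hence u' = u
    have hux' : IsX m u' := by
      rcases (memU u').mp hu'mem with h | h
      · exact absurd adj1' (fun h' => plane_indep hqm h hp1 h')
      · exact h
    have : u' = u := claim_unique hqm hm hux' hux hp1 adj1' adj1
    rw [this] at nadj2'
    exact nadj2' adj2
end

section
/- For every natural number q ≥ 3 there exists a subset U of the vertices of the Hamming graph H(2,q,2) with |U| = 2q − 1 such that the VC-dimension of (U, n(U)) is strictly less than 2. One such set is the set of vertices with at least one coordinate equal to 0. -/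
lemma adj2 {q : ℕ} (u w : Fin 2 → ZMod q) :
    hammingAdj 2 u w ↔ u 0 ≠ w 0 ∧ u 1 ≠ w 1 := by
  unfold hammingAdj
  rw [show (Finset.univ : Finset (Fin 2)) = {0, 1} by decide]
  by_cases h0 : u 0 ≠ w 0 <;> by_cases h1 : u 1 ≠ w 1 <;>
    simp_all [Finset.filter_insert, Finset.filter_singleton]


/-- for every `q ≥ 3` there is `U ⊆ V(H(2,q,2))` with `|U| = 2q - 1`
whose VC-dimension is strictly less than 2; one such set is the set of vertices with at
least one coordinate equal to 0. -/
theorem exists_vc_dim_lt_two_H2q2 (q : ℕ) (hq : 3 ≤ q) :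
    ∃ U : Finset (Fin 2 → ZMod q),
      U.card = 2 * q - 1 ∧
      (∀ W ⊆ U, Shatters 2 U W → W.card < 2) ∧
      (∀ x : Fin 2 → ZMod q, x ∈ U ↔ x 0 = 0 ∨ x 1 = 0) := by
  haveI : NeZero q := ⟨by omega⟩
  refine ⟨(Finset.univ : Finset (Fin 2 → ZMod q)).filter
      (fun x => x 0 = 0 ∨ x 1 = 0), ?_, ?_, ?_⟩
  · set A := (Finset.univ : Finset (Fin 2 → ZMod q)).filter (fun x => x 0 = 0)
    set B := (Finset.univ : Finset (Fin 2 → ZMod q)).filter (fun x => x 1 = 0)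
    have hU : ((Finset.univ : Finset (Fin 2 → ZMod q)).filter
        fun x => x 0 = 0 ∨ x 1 = 0) = A ∪ B := by
      ext x; simp [A, B, Finset.mem_union, Finset.mem_filter]
    have hA : A = Finset.univ.image (fun a : ZMod q => ![0, a]) := by
      ext x
      simp only [A, Finset.mem_filter, Finset.mem_image, Finset.mem_univ, true_and]
      constructor
      · intro h; exact ⟨x 1, by funext i; fin_cases i <;> simp [h.symm]⟩
      · rintro ⟨a, rfl⟩; rfl
    have hB : B = Finset.univ.image (fun a : ZMod q => ![a, 0]) := by
      ext x
      simp only [B, Finset.mem_filter, Finset.mem_image, Finset.mem_univ, true_and]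
      constructor
      · intro h; exact ⟨x 0, by funext i; fin_cases i <;> simp [h.symm]⟩
      · rintro ⟨a, rfl⟩; rfl
    have hcA : A.card = q := by
      rw [hA, Finset.card_image_of_injective _ (fun a b h => by
        simpa using congrFun h 1), Finset.card_univ, ZMod.card]
    have hcB : B.card = q := by
      rw [hB, Finset.card_image_of_injective _ (fun a b h => by
        simpa using congrFun h 0), Finset.card_univ, ZMod.card]
    have hAB : (A ∩ B).card = 1 := by
      have : A ∩ B = {![0, 0]} := by
        ext x
        simp only [A, B, Finset.mem_inter, Finset.mem_filter, Finset.mem_univ, true_and,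
          Finset.mem_singleton]
        constructor
        · rintro ⟨h0, h1⟩; funext i; fin_cases i <;> simp [h0, h1]
        · rintro rfl; exact ⟨rfl, rfl⟩
      rw [this, Finset.card_singleton]
    have := Finset.card_union_add_card_inter A B
    rw [hU]
    omega
  · intro W hW hsh
    by_contra h
    push_neg at h
    obtain ⟨w1, hw1, w2, hw2, hne⟩ := Finset.one_lt_card.mp h
    have hmem : ∀ x ∈ W, x 0 = 0 ∨ x 1 = 0 := fun x hx => by
      have := hW hx; simp only [Finset.mem_filter] at this; exact this.2
    obtain ⟨u, huU, hu⟩ := hsh {w1, w2} (by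
      intro x hx; simp only [Finset.mem_insert, Finset.mem_singleton] at hx
      rcases hx with rfl | rfl <;> assumption)
    have a1 := (adj2 u w1).mp ((hu w1 hw1).mp (by simp))
    have a2 := (adj2 u w2).mp ((hu w2 hw2).mp (by simp))
    have huU' : u 0 = 0 ∨ u 1 = 0 := by
      simp only [Finset.mem_filter] at huU; exact huU.2
    obtain ⟨v, hvU, hv⟩ := hsh {w1} (by simpa using hw1)
    have b1 := (adj2 v w1).mp ((hv w1 hw1).mp (by simp))
    have b2 : ¬ hammingAdj 2 v w2 := fun hc => by
      have := (hv w2 hw2).mpr hc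
      simp only [Finset.mem_singleton] at this
      exact hne this.symm
    rw [adj2] at b2
    push_neg at b2
    have hvU' : v 0 = 0 ∨ v 1 = 0 := by
      simp only [Finset.mem_filter] at hvU; exact hvU.2
    rcases huU' with h0 | h1
    · -- u 0 = 0, so w1 0 ≠ 0, w2 0 ≠ 0, hence w1 1 = 0, w2 1 = 0
      have hw10 : w1 0 ≠ 0 := fun hc => a1.1 (h0.trans hc.symm)
      have hw20 : w2 0 ≠ 0 := fun hc => a2.1 (h0.trans hc.symm)
      have hw11 : w1 1 = 0 := (hmem w1 hw1).resolve_left hw10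
      have hw21 : w2 1 = 0 := (hmem w2 hw2).resolve_left hw20
      have hv1 : v 1 ≠ 0 := by rw [hw11] at b1; exact b1.2
      have hv0 : v 0 = 0 := hvU'.resolve_right hv1
      have := b2 (by rw [hv0]; exact fun hc => hw20 hc.symm)
      rw [hw21] at this
      exact hv1 this
    · have hw11 : w1 1 ≠ 0 := fun hc => a1.2 (h1.trans hc.symm)
      have hw21 : w2 1 ≠ 0 := fun hc => a2.2 (h1.trans hc.symm)
      have hw10 : w1 0 = 0 := (hmem w1 hw1).resolve_right hw11
      have hw20 : w2 0 = 0 := (hmem w2 hw2).resolve_right hw21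
      have hv0 : v 0 ≠ 0 := by rw [hw10] at b1; exact b1.1
      have hv1 : v 1 = 0 := hvU'.resolve_left hv0
      have := b2 (by rw [hw20]; exact hv0)
      exact hw21 (this.symm.trans hv1)
  · intro x; simp [Finset.mem_filter]
end
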